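/- arXiv:2309.02070 — 6 statements merged into one kernel-verified Lean document; each statement's English description precedes it below -/
import Mathlib

section
/- Let X be a median graph and let C_1, …, C_k be finitely many nonempty convex sets of vertices of X that pairwise intersect. Then the intersection C_1 ∩ … ∩ C_k is nonempty. -/
open SimpleGraph

/-- A graph is median if it is connected and any three vertices admit a unique median. -/
def MedianGraph {V : Type*} (X : SimpleGraph V) : Prop :=
  X.Connected ∧ ∀ x y z : V, ∃! m : V,
    X.dist x m + X.dist m y = X.dist x y ∧
    X.dist y m + X.dist m z = X.dist y z ∧
    X.dist x m + X.dist m z = X.dist x z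

/-- A set of vertices is convex if it contains every vertex on a geodesic between
two of its points. -/
def IsConvex {V : Type*} (X : SimpleGraph V) (S : Set V) : Prop :=
  ∀ x ∈ S, ∀ y ∈ S, ∀ w : V, X.dist x w + X.dist w y = X.dist x y → w ∈ S

/-- A halfspace is a nonempty proper convex subset with convex complement. -/
def IsHalfspace {V : Type*} (X : SimpleGraph V) (D : Set V) : Prop :=
  D.Nonempty ∧ D ≠ Set.univ ∧ IsConvex X D ∧ IsConvex X Dᶜ

/-- The hypercube graph `Q_n`: vertices are functions `Fin n → Bool`,
two being adjacent iff they differ at exactly one coordinate. -/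
def cubeGraph (n : ℕ) : SimpleGraph (Fin n → Bool) where
  Adj f g := ∃! i, f i ≠ g i
  symm := by
    constructor
    rintro f g ⟨i, hi, hu⟩
    exact ⟨i, hi.symm, fun j hj => hu j hj.symm⟩
  loopless := by
    constructor
    rintro f ⟨i, hi, -⟩
    exact hi rfl

lemma isConvex_inter {V : Type*} (X : SimpleGraph V) {A B : Set V}
    (hA : IsConvex X A) (hB : IsConvex X B) : IsConvex X (A ∩ B) :=
  fun x hx y hy w hw => ⟨hA x hx.1 y hy.1 w hw, hB x hx.2 y hy.2 w hw⟩

lemma helly_three {V : Type*} (X : SimpleGraph V) (hX : MedianGraph X)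
    {A B D : Set V} (hA : IsConvex X A) (hB : IsConvex X B) (hD : IsConvex X D)
    (hAB : (A ∩ B).Nonempty) (hBD : (B ∩ D).Nonempty) (hAD : (A ∩ D).Nonempty) :
    (A ∩ B ∩ D).Nonempty := by
  obtain ⟨z, hzA, hzB⟩ := hAB
  obtain ⟨x, hxB, hxD⟩ := hBD
  obtain ⟨y, hyA, hyD⟩ := hAD
  obtain ⟨m, ⟨h1, h2, h3⟩, -⟩ := hX.2 x y z
  exact ⟨m, ⟨hA y hyA z hzA m h2, hB x hxB z hzB m h3⟩, hD x hxD y hyD m h1⟩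

/-- Helly property: finitely many pairwise-intersecting nonempty convex sets in a
median graph have nonempty global intersection. -/
theorem helly_convex_sets {V : Type*} (X : SimpleGraph V) (hX : MedianGraph X)
    (k : ℕ) (C : Fin k → Set V)
    (hconv : ∀ i, IsConvex X (C i))
    (hne : ∀ i, (C i).Nonempty)
    (hpair : ∀ i j, (C i ∩ C j).Nonempty) :
    (⋂ i, C i).Nonempty := by
  have hV : Nonempty V := hX.1.nonempty
  induction k with
  | zero => exact ⟨hV.some, by simp⟩
  | succ k ih =>
    cases k with
    | zero =>
      obtain ⟨c, hc⟩ := hne 0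
      refine ⟨c, Set.mem_iInter.2 fun i => ?_⟩
      have : i = 0 := Fin.fin_one_eq_zero i
      rwa [this]
    | succ n =>
      set D : Fin (n + 1) → Set V :=
        fun i => C i.castSucc ∩ C (Fin.last (n + 1)) with hD
      obtain ⟨p, hp⟩ := ih D
        (fun i => isConvex_inter X (hconv _) (hconv _))
        (fun i => hpair _ _)
        (fun i j => by
          obtain ⟨m, ⟨hm1, hm2⟩, hm3⟩ := helly_three X hX
            (hconv i.castSucc) (hconv j.castSucc) (hconv (Fin.last (n + 1)))
            (hpair _ _) (hpair _ _) (hpair _ _)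
          exact ⟨m, ⟨hm1, hm3⟩, ⟨hm2, hm3⟩⟩)
      have hp' := Set.mem_iInter.1 hp
      refine ⟨p, Set.mem_iInter.2 fun i => ?_⟩
      refine Fin.lastCases ?_ (fun j => ?_) i
      · exact (hp' 0).2
      · exact (hp' j).1
end

section
/- Let X be a median graph and let x, y be vertices of X. Then the graph distance d(x,y) equals the cardinality of the set of halfspaces D of X with x ∈ D and y ∉ D. -/
open SimpleGraph

section helpers
variable {V : Type*} {X : SimpleGraph V}

private lemma med_dichotomy (hX : MedianGraph X) {a b : V} (hab : X.dist a b = 1) (v : V) :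
    X.dist v b = X.dist v a + 1 ∨ X.dist v a = X.dist v b + 1 := by
  have hc := hX.1
  obtain ⟨m, ⟨e1, e2, e3⟩, -⟩ := hX.2 v a b
  rw [hab] at e2
  rcases Nat.eq_zero_or_pos (X.dist a m) with h0 | hpos
  · have ham : a = m := hc.dist_eq_zero_iff.mp h0
    rw [← ham, hab] at e3
    exact Or.inl e3.symm
  · have h0 : X.dist m b = 0 := by omega
    have hmb : m = b := hc.dist_eq_zero_iff.mp h0
    rw [hmb] at e1
    have hba : X.dist b a = 1 := by rw [SimpleGraph.dist_comm]; exact hab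
    rw [hba] at e1
    exact Or.inr e1.symm

private lemma exists_dist_one_step (hc : X.Connected) {x y : V} {k : ℕ}
    (h : X.dist x y = k + 1) : ∃ p : V, X.dist x p = 1 ∧ X.dist p y = k := by
  obtain ⟨w, hw⟩ := hc.exists_walk_length_eq_dist x y
  cases w with
  | nil => rw [h] at hw; simp at hw
  | @cons _ p _ ha q =>
    have hl : q.length + 1 = k + 1 := by
      rw [h] at hw; simpa using hw
    have hxp : X.dist x p = 1 := dist_eq_one_iff_adj.mpr ha
    have h1 : X.dist p y ≤ k := by have := dist_le q; omega
    have h2 : X.dist x y ≤ X.dist x p + X.dist p y := hc.dist_triangle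
    exact ⟨p, hxp, by omega⟩

private lemma Rlem (hX : MedianGraph X) : ∀ m : ℕ, ∀ a b u v z r : V, X.dist a b = 1 →
    (∀ p q s : V, X.dist p b < X.dist p a → X.dist q b < X.dist q a → X.dist p q ≤ m →
      X.dist p s + X.dist s q = X.dist p q → X.dist s b < X.dist s a) →
    X.dist u v = 1 → X.dist r z = 1 →
    X.dist u a < X.dist u b → X.dist r a < X.dist r b →
    X.dist v b < X.dist v a → X.dist z b < X.dist z a →
    X.dist v z = m → X.dist u z = m + 1 → X.dist v r = m + 1 → X.dist u r = m + 2 → False := by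
  have hc := hX.1
  have tri : ∀ p q s : V, X.dist p q ≤ X.dist p s + X.dist s q := fun _ _ _ => hc.dist_triangle
  have cm : ∀ p q : V, X.dist p q = X.dist q p := fun _ _ => SimpleGraph.dist_comm
  intro m
  induction m with
  | zero =>
    intro a b u v z r hab hconv huv hrz hu hr hv hz hvz huz hvr hur
    have hvz' : v = z := hc.dist_eq_zero_iff.mp hvz
    subst hvz'
    have dub : X.dist u b = X.dist u a + 1 := by
      rcases med_dichotomy hX hab u with h | h <;> omega
    have dva : X.dist v a = X.dist v b + 1 := by
      rcases med_dichotomy hX hab v with h | h <;> omega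
    have drb : X.dist r b = X.dist r a + 1 := by
      rcases med_dichotomy hX hab r with h | h <;> omega
    have hvb : X.dist v b = X.dist u a := by
      have t1 := tri v b u; have t2 := tri u b v; have t3 := tri v a u
      have t4 := tri u a v; have c1 := cm v u
      omega
    have hra : X.dist r a = X.dist v b := by
      have t1 := tri r b v; have t2 := tri v b r; have t3 := tri r a v
      have t4 := tri v a r; have c1 := cm v r
      omega
    -- median of u r a
    obtain ⟨m', ⟨f1, f2, f3⟩, -⟩ := hX.2 u r a
    rw [hur] at f1
    have hum' : X.dist u m' ≠ 0 := by
      intro h0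
      have he : u = m' := hc.dist_eq_zero_iff.mp h0
      rw [← he] at f2
      have c1 := cm u r
      omega
    have hm'r0 : X.dist m' r ≠ 0 := by
      intro h0
      have he : m' = r := hc.dist_eq_zero_iff.mp h0
      rw [he] at f3
      omega
    have hum1 : X.dist u m' = 1 := by omega
    have hm'r : X.dist m' r = 1 := by omega
    have hm'a : X.dist m' a + 1 = X.dist u a := by omega
    have hm'b : X.dist m' b = X.dist u a := by
      have t1 := tri u b m'
      rcases med_dichotomy hX hab m' with h | h <;> omega
    have hm'v : X.dist m' v = 2 := by
      have t1 := tri m' v u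
      have c1 := cm m' u
      have hne : X.dist m' v ≠ 1 := by
        intro h1
        have c2 := cm a m'; have c3 := cm a v
        rcases med_dichotomy hX h1 a with h | h <;> omega
      have hne0 : X.dist m' v ≠ 0 := by
        intro h0
        have he : m' = v := hc.dist_eq_zero_iff.mp h0
        rw [he] at f3
        omega
      omega
    -- median of m' v b
    obtain ⟨p, ⟨g1, g2, g3⟩, -⟩ := hX.2 m' v b
    rw [hm'v] at g1
    have hpm' : X.dist m' p ≠ 0 := by
      intro h0
      have he : m' = p := hc.dist_eq_zero_iff.mp h0
      rw [← he] at g2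
      have c1 := cm v m'
      omega
    have hpv0 : X.dist p v ≠ 0 := by
      intro h0
      have he : p = v := hc.dist_eq_zero_iff.mp h0
      rw [he] at g3
      omega
    have hm'p : X.dist m' p = 1 := by omega
    have hpv : X.dist p v = 1 := by omega
    have hpb : X.dist p b + 1 = X.dist v b := by
      have c1 := cm v p; omega
    have hup : X.dist u p = 2 := by
      have t1 := tri u p v; have t2 := tri u b p
      have c1 := cm v p
      omega
    have hrp : X.dist r p = 2 := by
      have t1 := tri r p v; have t2 := tri r b p
      have c1 := cm v p
      omega
    have hv_med : X.dist u v + X.dist v r = X.dist u r ∧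
        X.dist r v + X.dist v p = X.dist r p ∧ X.dist u v + X.dist v p = X.dist u p := by
      have c1 := cm v r; have c2 := cm p v
      omega
    have hm'_med : X.dist u m' + X.dist m' r = X.dist u r ∧
        X.dist r m' + X.dist m' p = X.dist r p ∧ X.dist u m' + X.dist m' p = X.dist u p := by
      have c1 := cm m' r; have c2 := cm r m'
      omega
    have hvm' : v = m' := (hX.2 u r p).unique hv_med hm'_med
    rw [hvm'] at dva hvb
    omega
  | succ m ih =>
    intro a b u v z r hab hconv huv hrz hu hr hv hz hvz huz hvr hur
    have dub : X.dist u b = X.dist u a + 1 := by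
      rcases med_dichotomy hX hab u with h | h <;> omega
    have dva : X.dist v a = X.dist v b + 1 := by
      rcases med_dichotomy hX hab v with h | h <;> omega
    have drb : X.dist r b = X.dist r a + 1 := by
      rcases med_dichotomy hX hab r with h | h <;> omega
    have dza : X.dist z a = X.dist z b + 1 := by
      rcases med_dichotomy hX hab z with h | h <;> omega
    have hvb : X.dist v b = X.dist u a := by
      have t1 := tri v b u; have t2 := tri u b v; have t3 := tri v a u
      have t4 := tri u a v; have c1 := cm v u
      omega
    have hra : X.dist r a = X.dist z b := by
      have t1 := tri r b z; have t2 := tri z b r; have t3 := tri r a z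
      have t4 := tri z a r; have c1 := cm z r
      omega
    have hconv' : ∀ p q s : V, X.dist p b < X.dist p a → X.dist q b < X.dist q a →
        X.dist p q ≤ m → X.dist p s + X.dist s q = X.dist p q → X.dist s b < X.dist s a :=
      fun p q s h1 h2 h3 h4 => hconv p q s h1 h2 (by omega) h4
    by_cases hcase : X.dist z v + X.dist v b = X.dist z b
    · -- z-side descent
      have hzv : X.dist z v = m + 1 := by rw [cm]; exact hvz
      obtain ⟨z₁, hzz₁, hz₁v⟩ := exists_dist_one_step hc hzv
      have hz₁b : X.dist z₁ b + 1 = X.dist z b := by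
        have t1 := tri z b z₁; have t2 := tri z₁ b v
        omega
      have hz₁side : X.dist z₁ b < X.dist z₁ a := by
        refine hconv v z z₁ hv hz (by omega) ?_
        have c1 := cm v z₁; have c2 := cm z₁ z
        omega
      have dz₁a : X.dist z₁ a = X.dist z₁ b + 1 := by
        rcases med_dichotomy hX hab z₁ with h | h <;> omega
      have hrz₁ : X.dist r z₁ = 2 := by
        have t1 := tri r z₁ z
        have hne : X.dist r z₁ ≠ 1 := by
          intro h1
          have c2 := cm b r; have c3 := cm b z₁
          rcases med_dichotomy hX h1 b with h | h <;> omega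
        have hne0 : X.dist r z₁ ≠ 0 := by
          intro h0
          have he : r = z₁ := hc.dist_eq_zero_iff.mp h0
          rw [← he] at hz₁side
          omega
        omega
      obtain ⟨h'', ⟨f1, f2, f3⟩, -⟩ := hX.2 r z₁ a
      rw [hrz₁] at f1
      have hf0 : X.dist r h'' ≠ 0 := by
        intro h0
        have he : r = h'' := hc.dist_eq_zero_iff.mp h0
        rw [← he] at f2
        have c1 := cm z₁ r
        omega
      have hf0' : X.dist h'' z₁ ≠ 0 := by
        intro h0
        have he : h'' = z₁ := hc.dist_eq_zero_iff.mp h0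
        rw [he] at f3
        omega
      have hrh : X.dist r h'' = 1 := by omega
      have hhz₁ : X.dist h'' z₁ = 1 := by omega
      have hha : X.dist h'' a + 1 = X.dist r a := by omega
      have hhb : X.dist h'' b = X.dist r a := by
        have t1 := tri r b h''
        rcases med_dichotomy hX hab h'' with h | h <;> omega
      refine ih a b u v z₁ h'' hab hconv' huv hhz₁ hu (by omega) hv hz₁side ?_ ?_ ?_ ?_
      · rw [cm]; exact hz₁v
      · have t1 := tri u z₁ v; have t2 := tri u z z₁
        have c1 := cm v z₁; have c2 := cm z₁ z
        omega
      · have t1 := tri v h'' z₁; have t2 := tri v r h''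
        have c1 := cm v z₁; have c2 := cm z₁ h''; have c3 := cm h'' r
        omega
      · have t1 := tri u h'' z₁; have t2 := tri u r h''
        have t3 := tri u z₁ v
        have c1 := cm z₁ h''; have c2 := cm h'' r; have c3 := cm v z₁
        omega
    · -- v-side descent
      obtain ⟨g, ⟨g1, g2, g3⟩, -⟩ := hX.2 v z b
      rw [hvz] at g1
      have hvg0 : X.dist v g ≠ 0 := by
        intro h0
        have he : v = g := hc.dist_eq_zero_iff.mp h0
        rw [← he] at g2
        exact hcase g2
      obtain ⟨k, hk⟩ : ∃ k, X.dist v g = k + 1 := ⟨X.dist v g - 1, by omega⟩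
      obtain ⟨v₁, hvv₁, hv₁g⟩ := exists_dist_one_step hc hk
      have hv₁z : X.dist v₁ z = m := by
        have t1 := tri v₁ z g; have t2 := tri v z v₁
        omega
      have hv₁b : X.dist v₁ b + 1 = X.dist v b := by
        have t1 := tri v₁ b g; have t2 := tri v b v₁
        omega
      have hv₁side : X.dist v₁ b < X.dist v₁ a := by
        refine hconv v z v₁ hv hz (by omega) ?_
        omega
      have dv₁a : X.dist v₁ a = X.dist v₁ b + 1 := by
        rcases med_dichotomy hX hab v₁ with h | h <;> omega
      have huv₁ : X.dist u v₁ = 2 := by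
        have t1 := tri u v₁ v
        have hne : X.dist u v₁ ≠ 1 := by
          intro h1
          have c2 := cm b u; have c3 := cm b v₁
          rcases med_dichotomy hX h1 b with h | h <;> omega
        have hne0 : X.dist u v₁ ≠ 0 := by
          intro h0
          have he : u = v₁ := hc.dist_eq_zero_iff.mp h0
          rw [← he] at hv₁side
          omega
        omega
      obtain ⟨h', ⟨f1, f2, f3⟩, -⟩ := hX.2 u v₁ a
      rw [huv₁] at f1
      have hf0 : X.dist u h' ≠ 0 := by
        intro h0
        have he : u = h' := hc.dist_eq_zero_iff.mp h0
        rw [← he] at f2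
        have c1 := cm v₁ u
        omega
      have hf0' : X.dist h' v₁ ≠ 0 := by
        intro h0
        have he : h' = v₁ := hc.dist_eq_zero_iff.mp h0
        rw [he] at f3
        omega
      have huh : X.dist u h' = 1 := by omega
      have hhv₁ : X.dist h' v₁ = 1 := by omega
      have hha : X.dist h' a + 1 = X.dist u a := by omega
      have hhb : X.dist h' b = X.dist u a := by
        have t1 := tri u b h'
        rcases med_dichotomy hX hab h' with h | h <;> omega
      refine ih a b h' v₁ z r hab hconv' hhv₁ hrz (by omega) hr hv₁side hz hv₁z ?_ ?_ ?_
      · have t1 := tri h' z v₁; have t2 := tri u z h'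
        have c1 := cm u h'; have c2 := cm h' v₁
        omega
      · have t1 := tri v₁ r z; have t2 := tri v r v₁
        have c1 := cm z r
        omega
      · have t1 := tri h' r v₁; have t2 := tri u r h'
        have t3 := tri v₁ r z
        have c1 := cm u h'; have c2 := cm h' v₁; have c3 := cm z r
        omega

private lemma Clem (hX : MedianGraph X) : ∀ n : ℕ, ∀ a b u w v0 : V, X.dist a b = 1 →
    X.dist u a < X.dist u b → X.dist w a < X.dist w b → X.dist u w = n →
    X.dist u v0 + X.dist v0 w = n → X.dist v0 a < X.dist v0 b := by
  have hc := hX.1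
  have tri : ∀ p q s : V, X.dist p q ≤ X.dist p s + X.dist s q := fun _ _ _ => hc.dist_triangle
  have cm : ∀ p q : V, X.dist p q = X.dist q p := fun _ _ => SimpleGraph.dist_comm
  intro n
  induction n using Nat.strong_induction_on with
  | _ n IH =>
  intro a b u w v0 hab hu hw huw hbet
  by_contra hcon
  have hv0 : X.dist v0 b < X.dist v0 a := by
    rcases med_dichotomy hX hab v0 with h | h <;> omega
  have hKne : {k : ℕ | ∃ v', (X.dist u v' + X.dist v' w = n ∧ X.dist v' b < X.dist v' a) ∧
      X.dist u v' = k}.Nonempty := ⟨X.dist u v0, v0, ⟨hbet, hv0⟩, rfl⟩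
  obtain ⟨v', ⟨hv'bet, hv'side⟩, hv'k⟩ := Nat.sInf_mem hKne
  have hk1 : X.dist u v' ≠ 0 := by
    intro h0
    have he : u = v' := hc.dist_eq_zero_iff.mp h0
    rw [← he] at hv'side; omega
  obtain ⟨k₁, hk₁⟩ : ∃ k₁, X.dist v' u = k₁ + 1 := ⟨X.dist u v' - 1, by rw [cm]; omega⟩
  obtain ⟨p, hv'p, hpu⟩ := exists_dist_one_step hc hk₁
  have hup : X.dist u p = k₁ := by rw [cm]; exact hpu
  have hcuv' : X.dist u v' = k₁ + 1 := by rw [cm]; exact hk₁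
  have hpw : X.dist u p + X.dist p w = n := by
    have t1 := tri p w v'
    have t2 := tri u w p
    have c1 := cm p v'
    omega
  have hpside : X.dist p a < X.dist p b := by
    rcases med_dichotomy hX hab p with h | h
    · omega
    · exfalso
      have hmem : X.dist u p ∈ {k : ℕ | ∃ v', (X.dist u v' + X.dist v' w = n ∧
          X.dist v' b < X.dist v' a) ∧ X.dist u v' = k} := ⟨p, ⟨hpw, by omega⟩, rfl⟩
      have hle := Nat.sInf_le hmem
      omega
  have hK'ne : {k : ℕ | ∃ z', (X.dist v' z' + X.dist z' w = X.dist v' w ∧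
      X.dist z' b < X.dist z' a) ∧ X.dist z' w = k}.Nonempty :=
    ⟨X.dist v' w, v', ⟨by rw [SimpleGraph.dist_self]; omega, hv'side⟩, rfl⟩
  obtain ⟨z, ⟨hzbet, hzside⟩, hzk⟩ := Nat.sInf_mem hK'ne
  have hzw0 : X.dist z w ≠ 0 := by
    intro h0
    have he : z = w := hc.dist_eq_zero_iff.mp h0
    rw [he] at hzside; omega
  obtain ⟨k₂, hk₂⟩ : ∃ k₂, X.dist z w = k₂ + 1 := ⟨X.dist z w - 1, by omega⟩
  obtain ⟨r, hzr, hrw⟩ := exists_dist_one_step hc hk₂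
  have hv'r : X.dist v' r = X.dist v' z + 1 := by
    have t1 := tri v' r z
    have t2 := tri v' w r
    omega
  have hrbet : X.dist v' r + X.dist r w = X.dist v' w := by
    have t1 := tri v' r z
    have t2 := tri v' w r
    omega
  have hrside : X.dist r a < X.dist r b := by
    rcases med_dichotomy hX hab r with h | h
    · omega
    · exfalso
      have hmem : X.dist r w ∈ {k : ℕ | ∃ z', (X.dist v' z' + X.dist z' w = X.dist v' w ∧
          X.dist z' b < X.dist z' a) ∧ X.dist z' w = k} := ⟨r, ⟨hrbet, by omega⟩, rfl⟩
      have hle := Nat.sInf_le hmem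
      omega
  have hpz : X.dist p z = X.dist v' z + 1 := by
    have t1 := tri p z v'
    have t2 := tri p w z
    have c1 := cm p v'
    omega
  have hpr : X.dist p r = X.dist v' z + 2 := by
    have t1 := tri p r v'
    have t2 := tri p w r
    have c1 := cm p v'
    omega
  have hmn : X.dist v' z + 2 ≤ n := by omega
  have hba : X.dist b a = 1 := by rw [cm]; exact hab
  have hconv : ∀ p' q' s' : V, X.dist p' b < X.dist p' a → X.dist q' b < X.dist q' a →
      X.dist p' q' ≤ X.dist v' z → X.dist p' s' + X.dist s' q' = X.dist p' q' →
      X.dist s' b < X.dist s' a :=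
    fun p' q' s' h1 h2 h3 h4 => IH (X.dist p' q') (by omega) b a p' q' s' hba h1 h2 rfl h4
  exact Rlem hX (X.dist v' z) a b p v' z r hab hconv (by rw [cm]; exact hv'p)
    (by rw [cm]; exact hzr) hpside hrside hv'side hzside rfl hpz hv'r hpr

end helpers

/-- In a median graph, the distance between two vertices equals the number of
halfspaces containing the first but not the second. -/
theorem dist_eq_card_separating_halfspaces {V : Type*} (X : SimpleGraph V)
    (hX : MedianGraph X) (x y : V) :
    X.dist x y = {D : Set V | IsHalfspace X D ∧ x ∈ D ∧ y ∉ D}.ncard := by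
  have hc := hX.1
  suffices H : ∀ n : ℕ, ∀ x y : V, X.dist x y = n →
      ({D : Set V | IsHalfspace X D ∧ x ∈ D ∧ y ∉ D}.Finite ∧
       {D : Set V | IsHalfspace X D ∧ x ∈ D ∧ y ∉ D}.ncard = n) by
    exact ((H _ x y rfl).2).symm
  intro n
  induction n with
  | zero =>
    intro x y h
    have hxy : x = y := hc.dist_eq_zero_iff.mp h
    subst hxy
    have hempty : {D : Set V | IsHalfspace X D ∧ x ∈ D ∧ x ∉ D} = ∅ := by
      ext D
      simp only [Set.mem_setOf_eq, Set.mem_empty_iff_false, iff_false]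
      rintro ⟨-, h1, h2⟩; exact h2 h1
    rw [hempty]
    exact ⟨Set.finite_empty, Set.ncard_empty _⟩
  | succ n ihn =>
    intro x y h
    obtain ⟨x', hxx', hx'y⟩ := exists_dist_one_step hc h
    set W : Set V := {v | X.dist v x < X.dist v x'} with hWdef
    have hxx'c : X.dist x' x = 1 := by rw [SimpleGraph.dist_comm]; exact hxx'
    have hWconv : IsConvex X W := by
      intro p hp q hq s hs
      simp only [hWdef, Set.mem_setOf_eq] at hp hq ⊢
      exact Clem hX (X.dist p q) x x' p q s hxx' hp hq rfl hs
    have hWcconv : IsConvex X Wᶜ := by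
      intro p hp q hq s hs
      simp only [hWdef, Set.mem_compl_iff, Set.mem_setOf_eq, not_lt] at hp hq ⊢
      have hp' : X.dist p x' < X.dist p x := by
        rcases med_dichotomy hX hxx' p with h1 | h1 <;> omega
      have hq' : X.dist q x' < X.dist q x := by
        rcases med_dichotomy hX hxx' q with h1 | h1 <;> omega
      have hs' := Clem hX (X.dist p q) x' x p q s hxx'c hp' hq' rfl hs
      omega
    have hxW : x ∈ W := by
      simp only [hWdef, Set.mem_setOf_eq]
      rw [SimpleGraph.dist_self, hxx']
      omega
    have hWhalf : IsHalfspace X W := by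
      refine ⟨⟨x, hxW⟩, ?_, hWconv, hWcconv⟩
      intro hUniv
      have hx'W : x' ∈ W := hUniv ▸ Set.mem_univ x'
      simp only [hWdef, Set.mem_setOf_eq] at hx'W
      rw [SimpleGraph.dist_self] at hx'W
      omega
    have hyW : y ∉ W := by
      simp only [hWdef, Set.mem_setOf_eq, not_lt]
      have c1 : X.dist y x = n + 1 := by rw [SimpleGraph.dist_comm]; exact h
      have c2 : X.dist y x' = n := by rw [SimpleGraph.dist_comm]; exact hx'y
      omega
    obtain ⟨hfin, hcard⟩ := ihn x' y hx'y
    have hset : {D : Set V | IsHalfspace X D ∧ x ∈ D ∧ y ∉ D}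
        = insert W {D : Set V | IsHalfspace X D ∧ x' ∈ D ∧ y ∉ D} := by
      ext D
      simp only [Set.mem_setOf_eq, Set.mem_insert_iff]
      constructor
      · rintro ⟨hD, hxD, hyD⟩
        by_cases hx'D : x' ∈ D
        · exact Or.inr ⟨hD, hx'D, hyD⟩
        · left
          ext v
          simp only [hWdef, Set.mem_setOf_eq]
          constructor
          · intro hvD
            by_contra hnlt
            have h1 : X.dist v x = X.dist v x' + 1 := by
              rcases med_dichotomy hX hxx' v with h1 | h1 <;> omega
            exact hx'D (hD.2.2.1 v hvD x hxD x' (by omega))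
          · intro hlt
            by_contra hvD
            have h1 : X.dist v x' = X.dist v x + 1 := by
              rcases med_dichotomy hX hxx' v with h1 | h1 <;> omega
            have hxc : x ∈ Dᶜ :=
              hD.2.2.2 v (Set.mem_compl hvD) x' (Set.mem_compl hx'D) x (by omega)
            exact hxc hxD
      · rintro (rfl | ⟨hD, hx'D, hyD⟩)
        · exact ⟨hWhalf, hxW, hyW⟩
        · refine ⟨hD, ?_, hyD⟩
          by_contra hxD
          have hx'c : x' ∈ Dᶜ :=
            hD.2.2.2 x (Set.mem_compl hxD) y (Set.mem_compl hyD) x' (by omega)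
          exact hx'c hx'D
    have hWnotmem : W ∉ {D : Set V | IsHalfspace X D ∧ x' ∈ D ∧ y ∉ D} := by
      intro hmem
      have hx'W : x' ∈ W := hmem.2.1
      simp only [hWdef, Set.mem_setOf_eq] at hx'W
      rw [SimpleGraph.dist_self] at hx'W
      omega
    constructor
    · rw [hset]; exact hfin.insert W
    · rw [hset, Set.ncard_insert_of_notMem hWnotmem hfin, hcard]
end

section
/- Let X be a median graph, v a vertex and a, b, c three pairwise distinct neighbours of v. Suppose each pair of the edges [v,a], [v,b], [v,c] spans a 4-cycle, i.e. for each pair among a, b, c there is a common neighbour of the two vertices distinct from v. Then the three edges span a 3-cube: there is a set of 8 vertices of X containing v, a, b, c whose induced subgraph is isomorphic to the hypercube graph Q_3, with v adjacent in this cube exactly to a, b, c. -/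
open SimpleGraph

section AuxMedian
variable {V : Type*} {X : SimpleGraph V}


lemma dist_two_aux (hc : X.Connected) {x y m : V} (hne : x ≠ y) (hnadj : ¬X.Adj x y)
    (h1 : X.Adj x m) (h2 : X.Adj m y) : X.dist x y = 2 := by
  have ht := hc.dist_triangle (u := x) (v := m) (w := y)
  rw [dist_eq_one_iff_adj.mpr h1, dist_eq_one_iff_adj.mpr h2] at ht
  have h0 : X.dist x y ≠ 0 := fun h => hne (hc.dist_eq_zero_iff.mp h)
  have h1' : X.dist x y ≠ 1 := fun h => hnadj (dist_eq_one_iff_adj.mp h)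
  omega

lemma tri_free (hX : MedianGraph X) {x y z : V} (h1 : X.Adj x y) (h2 : X.Adj y z)
    (h3 : X.Adj x z) : False := by
  obtain ⟨m, ⟨e1, e2, e3⟩, -⟩ := hX.2 x y z
  have hc := hX.1
  rw [dist_eq_one_iff_adj.mpr h1] at e1
  rw [dist_eq_one_iff_adj.mpr h2] at e2
  rw [dist_eq_one_iff_adj.mpr h3] at e3
  have h0 : X.dist x m = 0 ∨ X.dist m y = 0 := by omega
  rcases h0 with h0 | h0
  · obtain rfl := hc.dist_eq_zero_iff.mp h0
    rw [SimpleGraph.dist_comm (G := X) (u := y) (v := x), dist_eq_one_iff_adj.mpr h1] at e2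
    omega
  · obtain rfl := (hc.dist_eq_zero_iff.mp h0).symm
    have := dist_eq_one_iff_adj.mpr h1
    omega

lemma k23_false (hX : MedianGraph X) {x y p q r : V} (hxy : x ≠ y)
    (hpq : p ≠ q) (hpr : p ≠ r) (hqr : q ≠ r)
    (hpx : X.Adj p x) (hpy : X.Adj p y) (hqx : X.Adj q x) (hqy : X.Adj q y)
    (hrx : X.Adj r x) (hry : X.Adj r y) : False := by
  have hc := hX.1
  have hnpq : ¬X.Adj p q := fun h => tri_free hX h hqx hpx
  have hnpr : ¬X.Adj p r := fun h => tri_free hX h hrx hpx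
  have hnqr : ¬X.Adj q r := fun h => tri_free hX h hrx hqx
  have dpq := dist_two_aux hc hpq hnpq hpx hqx.symm
  have dqr := dist_two_aux hc hqr hnqr hqx hrx.symm
  have dpr := dist_two_aux hc hpr hnpr hpx hrx.symm
  have Px : X.dist p x + X.dist x q = X.dist p q ∧ X.dist q x + X.dist x r = X.dist q r ∧
      X.dist p x + X.dist x r = X.dist p r := by
    rw [dpq, dqr, dpr, dist_eq_one_iff_adj.mpr hpx, SimpleGraph.dist_comm (G := X) (u := x) (v := q),
      dist_eq_one_iff_adj.mpr hqx, SimpleGraph.dist_comm (G := X) (u := x) (v := r), dist_eq_one_iff_adj.mpr hrx]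
    exact ⟨rfl, rfl, rfl⟩
  have Py : X.dist p y + X.dist y q = X.dist p q ∧ X.dist q y + X.dist y r = X.dist q r ∧
      X.dist p y + X.dist y r = X.dist p r := by
    rw [dpq, dqr, dpr, dist_eq_one_iff_adj.mpr hpy, SimpleGraph.dist_comm (G := X) (u := y) (v := q),
      dist_eq_one_iff_adj.mpr hqy, SimpleGraph.dist_comm (G := X) (u := y) (v := r), dist_eq_one_iff_adj.mpr hry]
    exact ⟨rfl, rfl, rfl⟩
  exact hxy ((hX.2 p q r).unique Px Py)

end AuxMedian


/-- auxiliary vertex-labelling function for the 3-cube -/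
def cvert {V : Type*} (v a b c wab wac wbc u : V) (p : Fin 3 → Bool) : V :=
  cond (p 0) (cond (p 1) (cond (p 2) u wab) (cond (p 2) wac a))
    (cond (p 1) (cond (p 2) wbc b) (cond (p 2) c v))

lemma cube3_adj (p q : Fin 3 → Bool) :
    (cubeGraph 3).Adj p q ↔
      (¬p 0 = q 0 ∧ p 1 = q 1 ∧ p 2 = q 2) ∨
      (p 0 = q 0 ∧ ¬p 1 = q 1 ∧ p 2 = q 2) ∨
      (p 0 = q 0 ∧ p 1 = q 1 ∧ ¬p 2 = q 2) := by
  constructor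
  · rintro ⟨i, hi, hu⟩
    fin_cases i
    · exact Or.inl ⟨hi, by by_contra h; exact absurd (hu 1 h) (by decide),
        by by_contra h; exact absurd (hu 2 h) (by decide)⟩
    · exact Or.inr (Or.inl ⟨by by_contra h; exact absurd (hu 0 h) (by decide), hi,
        by by_contra h; exact absurd (hu 2 h) (by decide)⟩)
    · exact Or.inr (Or.inr ⟨by by_contra h; exact absurd (hu 0 h) (by decide),
        by by_contra h; exact absurd (hu 1 h) (by decide), hi⟩)
  · rintro (⟨h0, h1, h2⟩ | ⟨h0, h1, h2⟩ | ⟨h0, h1, h2⟩)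
    · exact ⟨0, h0, fun j hj => by
        fin_cases j
        · rfl
        · exact absurd h1 hj
        · exact absurd h2 hj⟩
    · exact ⟨1, h1, fun j hj => by
        fin_cases j
        · exact absurd h0 hj
        · rfl
        · exact absurd h2 hj⟩
    · exact ⟨2, h2, fun j hj => by
        fin_cases j
        · exact absurd h0 hj
        · exact absurd h1 hj
        · rfl⟩

lemma cube_assembly {V : Type*} (X : SimpleGraph V) (v a b c wab wac wbc u : V)
    (hva : X.Adj v a) (hvb : X.Adj v b) (hvc : X.Adj v c) (hawab : X.Adj a wab) (hawac : X.Adj a wac) (hbwab : X.Adj b wab) (hbwbc : X.Adj b wbc) (hcwac : X.Adj c wac) (hcwbc : X.Adj c wbc) (huwab : X.Adj u wab) (huwac : X.Adj u wac) (huwbc : X.Adj u wbc)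
    (nvwab : ¬X.Adj v wab) (nvwac : ¬X.Adj v wac) (nvwbc : ¬X.Adj v wbc) (nvu : ¬X.Adj v u) (nab : ¬X.Adj a b) (nac : ¬X.Adj a c) (nbc : ¬X.Adj b c) (nawbc : ¬X.Adj a wbc) (nbwac : ¬X.Adj b wac) (ncwab : ¬X.Adj c wab) (nau : ¬X.Adj a u) (nbu : ¬X.Adj b u) (ncu : ¬X.Adj c u) (nwabwac : ¬X.Adj wab wac) (nwabwbc : ¬X.Adj wab wbc) (nwacwbc : ¬X.Adj wac wbc)
    (dvwab : v ≠ wab) (dvwac : v ≠ wac) (dvwbc : v ≠ wbc) (dvu : v ≠ u) (dab : a ≠ b) (dac : a ≠ c) (dbc : b ≠ c) (dawbc : a ≠ wbc) (dbwac : b ≠ wac) (dcwab : c ≠ wab) (dau : a ≠ u) (dbu : b ≠ u) (dcu : c ≠ u) (dwabwac : wab ≠ wac) (dwabwbc : wab ≠ wbc) (dwacwbc : wac ≠ wbc) :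
    ∃ S : Set V, v ∈ S ∧ a ∈ S ∧ b ∈ S ∧ c ∈ S ∧ S.ncard = 8 ∧
      Nonempty (X.induce S ≃g cubeGraph 3) ∧
      ∀ w ∈ S, (X.Adj v w ↔ w = a ∨ w = b ∨ w = c) := by
  have hav : X.Adj a v := hva.symm
  have dva : v ≠ a := hva.ne
  have dav : a ≠ v := hva.ne'
  have hbv : X.Adj b v := hvb.symm
  have dvb : v ≠ b := hvb.ne
  have dbv : b ≠ v := hvb.ne'
  have hcv : X.Adj c v := hvc.symm
  have dvc : v ≠ c := hvc.ne
  have dcv : c ≠ v := hvc.ne'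
  have hwaba : X.Adj wab a := hawab.symm
  have dawab : a ≠ wab := hawab.ne
  have dwaba : wab ≠ a := hawab.ne'
  have hwaca : X.Adj wac a := hawac.symm
  have dawac : a ≠ wac := hawac.ne
  have dwaca : wac ≠ a := hawac.ne'
  have hwabb : X.Adj wab b := hbwab.symm
  have dbwab : b ≠ wab := hbwab.ne
  have dwabb : wab ≠ b := hbwab.ne'
  have hwbcb : X.Adj wbc b := hbwbc.symm
  have dbwbc : b ≠ wbc := hbwbc.ne
  have dwbcb : wbc ≠ b := hbwbc.ne'
  have hwacc : X.Adj wac c := hcwac.symm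
  have dcwac : c ≠ wac := hcwac.ne
  have dwacc : wac ≠ c := hcwac.ne'
  have hwbcc : X.Adj wbc c := hcwbc.symm
  have dcwbc : c ≠ wbc := hcwbc.ne
  have dwbcc : wbc ≠ c := hcwbc.ne'
  have hwabu : X.Adj wab u := huwab.symm
  have duwab : u ≠ wab := huwab.ne
  have dwabu : wab ≠ u := huwab.ne'
  have hwacu : X.Adj wac u := huwac.symm
  have duwac : u ≠ wac := huwac.ne
  have dwacu : wac ≠ u := huwac.ne'
  have hwbcu : X.Adj wbc u := huwbc.symm
  have duwbc : u ≠ wbc := huwbc.ne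
  have dwbcu : wbc ≠ u := huwbc.ne'
  have nwabv : ¬X.Adj wab v := fun h => nvwab h.symm
  have nwacv : ¬X.Adj wac v := fun h => nvwac h.symm
  have nwbcv : ¬X.Adj wbc v := fun h => nvwbc h.symm
  have nuv : ¬X.Adj u v := fun h => nvu h.symm
  have nba : ¬X.Adj b a := fun h => nab h.symm
  have nca : ¬X.Adj c a := fun h => nac h.symm
  have ncb : ¬X.Adj c b := fun h => nbc h.symm
  have nwbca : ¬X.Adj wbc a := fun h => nawbc h.symm
  have nwacb : ¬X.Adj wac b := fun h => nbwac h.symm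
  have nwabc : ¬X.Adj wab c := fun h => ncwab h.symm
  have nua : ¬X.Adj u a := fun h => nau h.symm
  have nub : ¬X.Adj u b := fun h => nbu h.symm
  have nuc : ¬X.Adj u c := fun h => ncu h.symm
  have nwacwab : ¬X.Adj wac wab := fun h => nwabwac h.symm
  have nwbcwab : ¬X.Adj wbc wab := fun h => nwabwbc h.symm
  have nwbcwac : ¬X.Adj wbc wac := fun h => nwacwbc h.symm
  have dwabv : wab ≠ v := dvwab.symm
  have dwacv : wac ≠ v := dvwac.symm
  have dwbcv : wbc ≠ v := dvwbc.symm
  have duv : u ≠ v := dvu.symm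
  have dba : b ≠ a := dab.symm
  have dca : c ≠ a := dac.symm
  have dcb : c ≠ b := dbc.symm
  have dwbca : wbc ≠ a := dawbc.symm
  have dwacb : wac ≠ b := dbwac.symm
  have dwabc : wab ≠ c := dcwab.symm
  have dua : u ≠ a := dau.symm
  have dub : u ≠ b := dbu.symm
  have duc : u ≠ c := dcu.symm
  have dwacwab : wac ≠ wab := dwabwac.symm
  have dwbcwab : wbc ≠ wab := dwabwbc.symm
  have dwbcwac : wbc ≠ wac := dwacwbc.symm
  have gvfff : cvert v a b c wab wac wbc u ![false, false, false] = v := rfl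
  have gvtff : cvert v a b c wab wac wbc u ![true, false, false] = a := rfl
  have gvftf : cvert v a b c wab wac wbc u ![false, true, false] = b := rfl
  have gvfft : cvert v a b c wab wac wbc u ![false, false, true] = c := rfl
  have gvttf : cvert v a b c wab wac wbc u ![true, true, false] = wab := rfl
  have gvtft : cvert v a b c wab wac wbc u ![true, false, true] = wac := rfl
  have gvftt : cvert v a b c wab wac wbc u ![false, true, true] = wbc := rfl
  have gvttt : cvert v a b c wab wac wbc u ![true, true, true] = u := rfl
  have hep : ∀ r : Fin 3 → Bool, r = ![r 0, r 1, r 2] := fun r => funext fun i => by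
    fin_cases i <;> rfl
  have hinj : Function.Injective (cvert v a b c wab wac wbc u) := by
    intro p q h
    cases hp0 : p 0 <;> cases hp1 : p 1 <;> cases hp2 : p 2 <;>
      cases hq0 : q 0 <;> cases hq1 : q 1 <;> cases hq2 : q 2 <;>
      simp only [cvert, hp0, hp1, hp2, hq0, hq1, hq2, Bool.cond_true, Bool.cond_false] at h <;>
      first
        | exact absurd h (by assumption)
        | (rw [hep p, hep q, hp0, hp1, hp2, hq0, hq1, hq2])
  have hbij : Function.Bijective
      (fun p => (⟨cvert v a b c wab wac wbc u p, ⟨p, rfl⟩⟩ :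
        Set.range (cvert v a b c wab wac wbc u))) := by
    constructor
    · intro p q h
      exact hinj (congrArg Subtype.val h)
    · rintro ⟨x, p, rfl⟩
      exact ⟨p, rfl⟩
  refine ⟨Set.range (cvert v a b c wab wac wbc u), ⟨_, gvfff⟩, ⟨_, gvtff⟩, ⟨_, gvftf⟩,
    ⟨_, gvfft⟩, ?_, ?_, ?_⟩
  · rw [← Nat.card_coe_set_eq, ← Nat.card_congr (Equiv.ofBijective _ hbij)]
    simp [Nat.card_eq_fintype_card]
  · refine ⟨SimpleGraph.Iso.symm ⟨Equiv.ofBijective _ hbij, ?_⟩⟩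
    intro p q
    simp only [Equiv.ofBijective_apply, comap_adj, Function.Embedding.coe_subtype]
    rw [cube3_adj, hep p, hep q]
    cases hp0 : p 0 <;> cases hp1 : p 1 <;> cases hp2 : p 2 <;>
      cases hq0 : q 0 <;> cases hq1 : q 1 <;> cases hq2 : q 2 <;>
      simp only [gvfff, gvtff, gvftf, gvfft, gvttf, gvtft, gvftt, gvttt] <;>
      first
        | exact iff_of_true (by assumption) (by decide)
        | exact iff_of_false (by first | assumption | exact X.loopless.irrefl _) (by decide)
  · rintro w ⟨p, rfl⟩
    rw [hep p]
    cases hp0 : p 0 <;> cases hp1 : p 1 <;> cases hp2 : p 2 <;>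
      simp only [gvfff, gvtff, gvftf, gvfft, gvttf, gvtft, gvftt, gvttt] <;>
      first
        | exact iff_of_true (by assumption) (by tauto)
        | exact iff_of_false (by first | assumption | exact X.loopless.irrefl _)
            (by rintro (h | h | h) <;> exact absurd h (by assumption))

/-- In a median graph, if three edges at a vertex pairwise span 4-cycles, then they
span a 3-cube. -/
theorem squares_span_threeCube {V : Type*} (X : SimpleGraph V) (hX : MedianGraph X)
    (v a b c : V) (hva : X.Adj v a) (hvb : X.Adj v b) (hvc : X.Adj v c)
    (hab : a ≠ b) (hac : a ≠ c) (hbc : b ≠ c)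
    (hsab : ∃ w, w ≠ v ∧ X.Adj a w ∧ X.Adj b w)
    (hsac : ∃ w, w ≠ v ∧ X.Adj a w ∧ X.Adj c w)
    (hsbc : ∃ w, w ≠ v ∧ X.Adj b w ∧ X.Adj c w) :
    ∃ S : Set V, v ∈ S ∧ a ∈ S ∧ b ∈ S ∧ c ∈ S ∧ S.ncard = 8 ∧
      Nonempty (X.induce S ≃g cubeGraph 3) ∧
      ∀ w ∈ S, (X.Adj v w ↔ w = a ∨ w = b ∨ w = c) := by
  have hc := hX.1
  obtain ⟨wab, hwabv, hawab, hbwab⟩ := hsab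
  obtain ⟨wac, hwacv, hawac, hcwac⟩ := hsac
  obtain ⟨wbc, hwbcv, hbwbc, hcwbc⟩ := hsbc
  -- basic non-adjacencies from triangle-freeness
  have nab : ¬X.Adj a b := fun h => tri_free hX hva h hvb
  have nac : ¬X.Adj a c := fun h => tri_free hX hva h hvc
  have nbc : ¬X.Adj b c := fun h => tri_free hX hvb h hvc
  have nvwab : ¬X.Adj v wab := fun h => tri_free hX hva hawab h
  have nvwac : ¬X.Adj v wac := fun h => tri_free hX hva hawac h
  have nvwbc : ¬X.Adj v wbc := fun h => tri_free hX hvb hbwbc h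
  -- no K_{2,3}: opposite corners of distinct squares are non-adjacent
  have nawbc : ¬X.Adj a wbc := fun h =>
    k23_false hX hwbcv.symm hab hac hbc hva.symm h hvb.symm hbwbc hvc.symm hcwbc
  have nbwac : ¬X.Adj b wac := fun h =>
    k23_false hX hwacv.symm hab hac hbc hva.symm hawac hvb.symm h hvc.symm hcwac
  have ncwab : ¬X.Adj c wab := fun h =>
    k23_false hX hwabv.symm hab hac hbc hva.symm hawab hvb.symm hbwab hvc.symm h
  -- the three square corners are pairwise distinct
  have dwabwac : wab ≠ wac := fun h =>
    k23_false hX hwabv.symm hab hac hbc hva.symm hawab hvb.symm hbwab hvc.symm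
      (by rw [h]; exact hcwac)
  have dwabwbc : wab ≠ wbc := fun h =>
    k23_false hX hwabv.symm hab hac hbc hva.symm hawab hvb.symm hbwab hvc.symm
      (by rw [h]; exact hcwbc)
  have dwacwbc : wac ≠ wbc := fun h =>
    k23_false hX hwacv.symm hab hac hbc hva.symm hawac hvb.symm
      (by rw [h]; exact hbwbc) hvc.symm hcwac
  -- square corners are pairwise non-adjacent
  have nwabwac : ¬X.Adj wab wac := fun h => tri_free hX hawab h hawac
  have nwabwbc : ¬X.Adj wab wbc := fun h => tri_free hX hbwab h hbwbc
  have nwacwbc : ¬X.Adj wac wbc := fun h => tri_free hX hcwac h hcwbc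
  -- distances between square corners
  have dw1 : X.dist wab wac = 2 := dist_two_aux hc dwabwac nwabwac hawab.symm hawac
  have dw2 : X.dist wac wbc = 2 := dist_two_aux hc dwacwbc nwacwbc hcwac.symm hcwbc
  have dw3 : X.dist wab wbc = 2 := dist_two_aux hc dwabwbc nwabwbc hbwab.symm hbwbc
  -- the median u of the three square corners is the top of the cube
  obtain ⟨u, ⟨e1, e2, e3⟩, -⟩ := hX.2 wab wac wbc
  rw [dw1] at e1
  rw [dw2] at e2
  rw [dw3] at e3
  have hd1 : X.dist wab u = 1 := by
    have hcase : X.dist wab u = 0 ∨ X.dist wab u = 1 ∨ X.dist wab u = 2 := by omega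
    rcases hcase with h | h | h
    · exfalso
      obtain rfl := hc.dist_eq_zero_iff.mp h
      rw [SimpleGraph.dist_comm (G := X) (u := wac) (v := wab), dw1, dw3] at e2
      omega
    · exact h
    · exfalso
      have h2 : X.dist u wac = 0 := by omega
      obtain rfl := hc.dist_eq_zero_iff.mp h2
      rw [dw1, dw2] at e3
      omega
  have hd2 : X.dist u wac = 1 := by omega
  have hd3 : X.dist u wbc = 1 := by omega
  have hu_ab : X.Adj u wab := (SimpleGraph.dist_eq_one_iff_adj.mp hd1).symm
  have hu_ac : X.Adj u wac := SimpleGraph.dist_eq_one_iff_adj.mp hd2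
  have hu_bc : X.Adj u wbc := SimpleGraph.dist_eq_one_iff_adj.mp hd3
  -- u is a new vertex
  have dau : a ≠ u := fun h => nawbc (by rw [h]; exact hu_bc)
  have dbu : b ≠ u := fun h => nbwac (by rw [h]; exact hu_ac)
  have dcu : c ≠ u := fun h => ncwab (by rw [h]; exact hu_ab)
  have dvu : v ≠ u := fun h => nvwab (by rw [h]; exact hu_ab)
  -- non-adjacencies involving u
  have nvu : ¬X.Adj v u := fun h =>
    k23_false hX dau hwabv.symm hwacv.symm dwabwac hva h hawab.symm hu_ab.symm
      hawac.symm hu_ac.symm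
  have nau : ¬X.Adj a u := fun h => tri_free hX hawab hu_ab.symm h
  have nbu : ¬X.Adj b u := fun h => tri_free hX hbwab hu_ab.symm h
  have ncu : ¬X.Adj c u := fun h => tri_free hX hcwac hu_ac.symm h
  have dawbc : a ≠ wbc := fun h => nab (by rw [h]; exact hbwbc.symm)
  have dbwac : b ≠ wac := fun h => nab (by rw [h]; exact hawac)
  have dcwab : c ≠ wab := fun h => nac (by rw [h]; exact hawab)
  exact cube_assembly X v a b c wab wac wbc u hva hvb hvc hawab hawac hbwab hbwbc hcwac
    hcwbc hu_ab hu_ac hu_bc nvwab nvwac nvwbc nvu nab nac nbc nawbc nbwac ncwab nau nbu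
    ncu nwabwac nwabwbc nwacwbc hwabv.symm hwacv.symm hwbcv.symm dvu hab hac hbc dawbc
    dbwac dcwab dau dbu dcu dwabwac dwabwbc dwacwbc
end

section
/- Let G be a group acting on a median graph X by graph automorphisms, and let z be a central element of G such that for some vertex o the set {d(o, z^n · o) : n ∈ ℤ} is unbounded. Then there exists a group homomorphism Θ : G → ℤ with Θ(z) ≠ 0. -/
open SimpleGraph

namespace MGAux

variable {V : Type*} {X : SimpleGraph V}

/-- Betweenness with respect to the graph metric. -/
def Btw (X : SimpleGraph V) (x m y : V) : Prop :=
  X.dist x m + X.dist m y = X.dist x y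

lemma btw_refl_left (x y : V) : Btw X x x y := by
  simp [Btw, SimpleGraph.dist_self]

lemma btw_refl_right (x y : V) : Btw X x y y := by
  simp [Btw, SimpleGraph.dist_self]

lemma dcomm (X : SimpleGraph V) (a b : V) : X.dist a b = X.dist b a :=
  SimpleGraph.dist_comm

lemma btw_symm {x m y : V} (h : Btw X x m y) : Btw X y m x := by
  unfold Btw at *
  rw [dcomm X y m, dcomm X m x, dcomm X y x]
  omega

/-- `m` before `u` on the way, and `u` before `v`: then `m` before `v`. -/
lemma btw_concat (hc : X.Connected) {x m u v : V}
    (h1 : Btw X x m u) (h2 : Btw X x u v) : Btw X x m v := by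
  unfold Btw at *
  have t1 : X.dist m v ≤ X.dist m u + X.dist u v := hc.dist_triangle
  have t2 : X.dist x v ≤ X.dist x m + X.dist m v := hc.dist_triangle
  omega

/-- From `Btw x w y` and `Btw w m y` deduce `Btw x m y`. -/
lemma btw_mid (hc : X.Connected) {x w m y : V}
    (h1 : Btw X x w y) (h2 : Btw X w m y) : Btw X x m y := by
  unfold Btw at *
  have t1 : X.dist x m ≤ X.dist x w + X.dist w m := hc.dist_triangle
  have t2 : X.dist x y ≤ X.dist x m + X.dist m y := hc.dist_triangle
  omega

/-- From `Btw x w y` and `Btw x w' w`, the tail `Btw w' w y` holds. -/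
lemma btw_tail (hc : X.Connected) {x w' w y : V}
    (h1 : Btw X x w y) (h2 : Btw X x w' w) : Btw X w' w y := by
  unfold Btw at *
  have t1 : X.dist w' y ≤ X.dist w' w + X.dist w y := hc.dist_triangle
  have t2 : X.dist x y ≤ X.dist x w' + X.dist w' y := hc.dist_triangle
  omega

lemma exists_step (hc : X.Connected) {x y : V} (h : X.dist x y ≠ 0) :
    ∃ x' : V, X.Adj x x' ∧ X.dist x' y + 1 = X.dist x y := by
  obtain ⟨p, hp⟩ := hc.exists_walk_length_eq_dist x y
  cases p with
  | nil => simp at hp; simp [SimpleGraph.dist_self] at h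
  | cons hadj q =>
    rename_i x'
    refine ⟨x', hadj, ?_⟩
    have h1 : X.dist x' y ≤ q.length := SimpleGraph.dist_le q
    have h2 : X.dist x y ≤ 1 + X.dist x' y := by
      have := hc.dist_triangle (u := x) (v := x') (w := y)
      have hxx' : X.dist x x' = 1 := SimpleGraph.dist_eq_one_iff_adj.mpr hadj
      omega
    simp only [SimpleGraph.Walk.length_cons] at hp
    omega

lemma exists_med (hX : MedianGraph X) (x y z : V) :
    ∃ m : V, Btw X x m y ∧ Btw X y m z ∧ Btw X x m z := by
  obtain ⟨m, hm, -⟩ := hX.2 x y z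
  exact ⟨m, hm.1, hm.2.1, hm.2.2⟩

lemma med_unique (hX : MedianGraph X) {x y z m m' : V}
    (h : Btw X x m y ∧ Btw X y m z ∧ Btw X x m z)
    (h' : Btw X x m' y ∧ Btw X y m' z ∧ Btw X x m' z) : m = m' := by
  obtain ⟨n, -, hu⟩ := hX.2 x y z
  have h1 := hu m ⟨h.1, h.2.1, h.2.2⟩
  have h2 := hu m' ⟨h'.1, h'.2.1, h'.2.2⟩
  rw [h1, h2]

/-- In a median graph, adjacent vertices have different distances to any point
(bipartiteness). -/
lemma dist_adj_ne (hX : MedianGraph X) {u v : V} (huv : X.Adj u v) (p : V) :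
    X.dist p u ≠ X.dist p v := by
  have hc := hX.1
  obtain ⟨m, h1, h2, h3⟩ := exists_med hX u p v
  have huv1 : X.dist u v = 1 := SimpleGraph.dist_eq_one_iff_adj.mpr huv
  unfold Btw at h1 h2 h3
  rw [huv1] at h3
  have : X.dist u m = 0 ∨ X.dist m v = 0 := by omega
  rcases this with h | h
  · have hum : u = m := (hc.dist_eq_zero_iff).mp h
    rw [← hum] at h1 h2 h3
    -- h2 : dist p u + dist u v = dist p v
    rw [huv1] at h2
    omega
  · have hmv : m = v := (hc.dist_eq_zero_iff).mp h
    rw [hmv] at h1 h2 h3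
    -- h1 : dist u v + dist v p = dist u p
    rw [huv1] at h1
    rw [dcomm X p u, dcomm X p v]
    omega

/-- The halfspace of an (oriented) edge. -/
def Wside (X : SimpleGraph V) (u v : V) : Set V := {w | X.dist w u < X.dist w v}

lemma mem_W_iff (hc : X.Connected) {u v : V} (huv : X.Adj u v) {w : V} :
    w ∈ Wside X u v ↔ X.dist w v = X.dist w u + 1 := by
  constructor
  · intro h
    have h1 : X.dist w v ≤ X.dist w u + X.dist u v := hc.dist_triangle
    rw [SimpleGraph.dist_eq_one_iff_adj.mpr huv] at h1
    exact le_antisymm h1 h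
  · intro h; exact (by omega : X.dist w u < X.dist w v)

lemma not_mem_W_iff (hX : MedianGraph X) {u v : V} (huv : X.Adj u v) {w : V} :
    w ∉ Wside X u v ↔ w ∈ Wside X v u := by
  have hne := dist_adj_ne hX huv w
  constructor
  · intro h
    have : ¬ X.dist w u < X.dist w v := h
    exact (by omega : X.dist w v < X.dist w u)
  · intro h hmem
    have h1 : X.dist w v < X.dist w u := h
    have h2 : X.dist w u < X.dist w v := hmem
    omega

lemma mem_W_self {u v : V} (huv : X.Adj u v) : u ∈ Wside X u v := by
  have : X.dist u v = 1 := SimpleGraph.dist_eq_one_iff_adj.mpr huv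
  have : X.dist u u = 0 := SimpleGraph.dist_self
  exact (by unfold Wside; simp only [Set.mem_setOf_eq]; omega)

/-- Key step: convexity of edge halfspaces, adjacent case. -/
lemma convex_step (hX : MedianGraph X) {u v x y w : V} (huv : X.Adj u v)
    (hx : x ∈ Wside X u v) (hy : y ∈ Wside X u v) (hadj : X.Adj x w)
    (hbtw : Btw X x w y) : w ∈ Wside X u v := by
  have hc := hX.1
  by_contra hw
  have hw' : w ∈ Wside X v u := (not_mem_W_iff hX huv).mp hw
  have hxe : X.dist x v = X.dist x u + 1 := (mem_W_iff hc huv).mp hx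
  have hye : X.dist y v = X.dist y u + 1 := (mem_W_iff hc huv).mp hy
  have hwe : X.dist w u = X.dist w v + 1 := (mem_W_iff hc huv.symm).mp hw'
  have hxw : X.dist x w = 1 := SimpleGraph.dist_eq_one_iff_adj.mpr hadj
  have huv1 : X.dist u v = 1 := SimpleGraph.dist_eq_one_iff_adj.mpr huv
  -- around the edge x-w
  have t1 : X.dist x u ≤ X.dist x w + X.dist w u := hc.dist_triangle
  have t2 : X.dist w u ≤ X.dist w x + X.dist x u := hc.dist_triangle
  have t3 : X.dist x v ≤ X.dist x w + X.dist w v := hc.dist_triangle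
  have t4 : X.dist w v ≤ X.dist w x + X.dist x v := hc.dist_triangle
  have hwx : X.dist w x = 1 := by rw [dcomm X w x]; exact hxw
  have hb : X.dist w v = X.dist x u := by omega
  have hwxv : Btw X x w v := by
    unfold Btw; omega
  have hxuv : Btw X x u v := by
    unfold Btw; omega
  have hyuv : Btw X y u v := by
    unfold Btw; omega
  obtain ⟨ν, hν1, hν2, hν3⟩ := exists_med hX x y u
  -- ν between x and v, y and v
  have hνxv : Btw X x ν v := btw_concat hc hν3 hxuv
  have hνyv : Btw X y ν v := btw_concat hc hν2 hyuv
  have hνsign : X.dist ν v = X.dist ν u + 1 := by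
    have e1 := hν2; have e2 := hνyv; unfold Btw at e1 e2; omega
  obtain ⟨μ, hμ1, hμ2, hμ3⟩ := exists_med hX w y v
  have hμxy : Btw X x μ y := btw_mid hc hbtw hμ1
  have hμxv : Btw X x μ v := btw_mid hc hwxv hμ3
  have hμν : μ = ν := med_unique hX ⟨hμxy, hμ2, hμxv⟩ ⟨hν1, hνyv, hνxv⟩
  -- contradiction
  have e3 := hμ3; unfold Btw at e3
  rw [hμν] at e3
  have t5 : X.dist w u ≤ X.dist w ν + X.dist ν u := hc.dist_triangle
  omega

/-- Convexity of edge halfspaces. -/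
lemma W_convex (hX : MedianGraph X) {u v : V} (huv : X.Adj u v) :
    ∀ (k : ℕ) (x y w : V), X.dist x w = k → x ∈ Wside X u v → y ∈ Wside X u v →
      Btw X x w y → w ∈ Wside X u v := by
  have hc := hX.1
  intro k
  induction k using Nat.strong_induction_on with
  | _ k IH =>
    intro x y w hd hx hy hbtw
    rcases Nat.eq_zero_or_pos k with hk | hk
    · subst hk
      have : x = w := (hc.dist_eq_zero_iff).mp hd
      rwa [← this]
    · obtain ⟨x', hadj, hstep⟩ := exists_step hc (by omega : X.dist x w ≠ 0)
      have hxx' : X.dist x x' = 1 := SimpleGraph.dist_eq_one_iff_adj.mpr hadj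
      have hbtw1 : Btw X x x' w := by unfold Btw; omega
      have hbtw2 : Btw X x x' y := btw_concat hc hbtw1 hbtw
      have hbtw3 : Btw X x' w y := btw_tail hc hbtw hbtw1
      by_cases hx' : x' ∈ Wside X u v
      · exact IH (k - 1) (by omega) x' y w (by omega) hx' hy hbtw3
      · exact absurd (convex_step hX huv hx hy hadj hbtw2) hx'

lemma W_convex' (hX : MedianGraph X) {u v x y w : V} (huv : X.Adj u v)
    (hx : x ∈ Wside X u v) (hy : y ∈ Wside X u v) (hbtw : Btw X x w y) :
    w ∈ Wside X u v :=
  W_convex hX huv _ x y w rfl hx hy hbtw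

/-- Wall equality: an edge crossing a halfspace determines it. -/
lemma wall_eq (hX : MedianGraph X) {u v p q : V} (huv : X.Adj u v) (hpq : X.Adj p q)
    (hp : p ∈ Wside X u v) (hq : q ∉ Wside X u v) :
    Wside X u v = Wside X p q := by
  have hc := hX.1
  have hpq1 : X.dist p q = 1 := SimpleGraph.dist_eq_one_iff_adj.mpr hpq
  ext t
  constructor
  · intro ht
    by_contra h
    have h' : t ∈ Wside X q p := (not_mem_W_iff hX hpq).mp h
    have he : X.dist t p = X.dist t q + 1 := (mem_W_iff hc hpq.symm).mp h'
    have hbtw : Btw X t q p := by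
      unfold Btw
      rw [dcomm X q p]
      omega
    exact hq (W_convex' hX huv ht hp hbtw)
  · intro ht
    by_contra h
    have h' : t ∈ Wside X v u := (not_mem_W_iff hX huv).mp h
    have hq' : q ∈ Wside X v u := (not_mem_W_iff hX huv).mp hq
    have he : X.dist t q = X.dist t p + 1 := (mem_W_iff hc hpq).mp ht
    have hbtw : Btw X t p q := by unfold Btw; omega
    have hpWvu : p ∈ Wside X v u := W_convex' hX huv.symm h' hq' hbtw
    exact ((not_mem_W_iff hX huv).mpr hpWvu) hp

/-- Sets of the form `Wside u v` for an edge `uv`. -/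
def Wform (X : SimpleGraph V) (A : Set V) : Prop :=
  ∃ u v : V, X.Adj u v ∧ A = Wside X u v

lemma wform_convex (hX : MedianGraph X) {A : Set V} (hA : Wform X A) {x y w : V}
    (hx : x ∈ A) (hy : y ∈ A) (h : Btw X x w y) : w ∈ A := by
  obtain ⟨u, v, huv, rfl⟩ := hA
  exact W_convex' hX huv hx hy h

lemma wform_compl (hX : MedianGraph X) {A : Set V} (hA : Wform X A) : Wform X Aᶜ := by
  obtain ⟨u, v, huv, rfl⟩ := hA
  refine ⟨v, u, huv.symm, ?_⟩
  ext w
  simp only [Set.mem_compl_iff]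
  exact not_mem_W_iff hX huv

lemma wform_compl_convex (hX : MedianGraph X) {A : Set V} (hA : Wform X A) {x y w : V}
    (hx : x ∉ A) (hy : y ∉ A) (h : Btw X x w y) : w ∉ A :=
  wform_convex hX (wform_compl hX hA) hx hy h

/-- Halfspaces of `Wform` separating `x` from `y` (containing `y`, not `x`). -/
def Seps (X : SimpleGraph V) (x y : V) : Set (Set V) :=
  {A | Wform X A ∧ x ∉ A ∧ y ∈ A}

lemma seps_self (x : V) : Seps X x x = ∅ := by
  ext A; simp only [Seps, Set.mem_setOf_eq, Set.mem_empty_iff_false, iff_false]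
  rintro ⟨-, h1, h2⟩; exact h1 h2

/-- Recursion for separating halfspaces along a first step of a geodesic. -/
lemma seps_insert (hX : MedianGraph X) {x x' y : V} (hadj : X.Adj x x')
    (hstep : X.dist x' y + 1 = X.dist x y) :
    Seps X x y = insert (Wside X x' x) (Seps X x' y) := by
  have hc := hX.1
  have hxx' : X.dist x x' = 1 := SimpleGraph.dist_eq_one_iff_adj.mpr hadj
  have hbtw : Btw X x x' y := by unfold Btw; omega
  ext A
  simp only [Seps, Set.mem_setOf_eq, Set.mem_insert_iff]
  constructor
  · rintro ⟨hA, hxA, hyA⟩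
    by_cases hx'A : x' ∈ A
    · left
      obtain ⟨u, v, huv, rfl⟩ := hA
      exact wall_eq hX huv hadj.symm hx'A hxA
    · right; exact ⟨hA, hx'A, hyA⟩
  · rintro (rfl | ⟨hA, hx'A, hyA⟩)
    · refine ⟨⟨x', x, hadj.symm, rfl⟩, ?_, ?_⟩
      · intro hmem
        have : X.dist x x' < X.dist x x := hmem
        simp [SimpleGraph.dist_self] at this
      · have : X.dist y x' < X.dist y x := by
          rw [dcomm X y x', dcomm X y x]; omega
        exact this
    · refine ⟨hA, ?_, hyA⟩
      intro hxA
      exact hx'A (wform_convex hX hA hxA hyA hbtw)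

lemma seps_finite_card (hX : MedianGraph X) :
    ∀ (k : ℕ) (x y : V), X.dist x y = k → (Seps X x y).Finite ∧ (Seps X x y).ncard = k := by
  have hc := hX.1
  intro k
  induction k using Nat.strong_induction_on with
  | _ k IH =>
    intro x y hd
    rcases Nat.eq_zero_or_pos k with hk | hk
    · subst hk
      have : x = y := (hc.dist_eq_zero_iff).mp hd
      subst this
      simp [seps_self]
    · obtain ⟨x', hadj, hstep⟩ := exists_step hc (by omega : X.dist x y ≠ 0)
      have hrec := seps_insert hX (y := y) hadj (by omega)
      obtain ⟨hfin, hcard⟩ := IH (k - 1) (by omega) x' y (by omega)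
      have hnot : Wside X x' x ∉ Seps X x' y := by
        rintro ⟨-, h1, -⟩
        exact h1 (mem_W_self hadj.symm)
      constructor
      · rw [hrec]; exact hfin.insert _
      · rw [hrec, Set.ncard_insert_of_notMem hnot hfin, hcard]
        omega

/-- Graph isomorphisms preserve the graph distance. -/
lemma iso_dist (hc : X.Connected) (f : X ≃g X) (a b : V) :
    X.dist (f a) (f b) = X.dist a b := by
  have h1 : ∀ (g : X ≃g X) (a b : V), X.dist (g a) (g b) ≤ X.dist a b := by
    intro g a b
    obtain ⟨p, hp⟩ := hc.exists_walk_length_eq_dist a b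
    have := SimpleGraph.dist_le (p.map g.toHom)
    rwa [SimpleGraph.Walk.length_map, hp] at this
  refine le_antisymm (h1 f a b) ?_
  have := h1 f.symm (f a) (f b)
  simpa using this

section Action

variable {G : Type*} [Group G]

/-- The `n`-th power of the central element acting on vertices. -/
def zp (φ : G →* (X ≃g X)) (z : G) (n : ℤ) : V → V := ⇑(φ (z ^ n))

lemma zp_add (φ : G →* (X ≃g X)) (z : G) (m n : ℤ) (x : V) :
    zp φ z (m + n) x = zp φ z m (zp φ z n x) := by
  unfold zp
  rw [zpow_add, map_mul]
  rfl

lemma zp_zero (φ : G →* (X ≃g X)) (z : G) (x : V) : zp φ z 0 x = x := by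
  unfold zp
  rw [zpow_zero, map_one]
  rfl

lemma zp_cancel (φ : G →* (X ≃g X)) (z : G) (n : ℤ) (x : V) :
    zp φ z (-n) (zp φ z n x) = x := by
  rw [← zp_add, neg_add_cancel, zp_zero]

lemma zp_cancel' (φ : G →* (X ≃g X)) (z : G) (n : ℤ) (x : V) :
    zp φ z n (zp φ z (-n) x) = x := by
  rw [← zp_add, add_neg_cancel, zp_zero]

lemma zp_dist (hc : X.Connected) (φ : G →* (X ≃g X)) (z : G) (n : ℤ) (a b : V) :
    X.dist (zp φ z n a) (zp φ z n b) = X.dist a b :=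
  iso_dist hc (φ (z ^ n)) a b

lemma zp_adj (φ : G →* (X ≃g X)) (z : G) (n : ℤ) {a b : V} (h : X.Adj a b) :
    X.Adj (zp φ z n a) (zp φ z n b) :=
  (φ (z ^ n)).map_adj_iff.mpr h

lemma zp_comm (φ : G →* (X ≃g X)) {z : G} (hz : z ∈ Subgroup.center G) (g : G) (n : ℤ)
    (x : V) : (φ g) (zp φ z n x) = zp φ z n ((φ g) x) := by
  have hmem : z ^ n ∈ Subgroup.center G := Subgroup.zpow_mem _ hz n
  have hcomm : g * z ^ n = z ^ n * g := (Subgroup.mem_center_iff.mp hmem g)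
  have : φ (g * z ^ n) = φ (z ^ n * g) := by rw [hcomm]
  rw [map_mul, map_mul] at this
  exact congrFun (congrArg (fun (e : X ≃g X) => ⇑e) this) x

/-- Translate of a set of vertices by the `j`-th power of the central element. -/
def trS (φ : G →* (X ≃g X)) (z : G) (j : ℤ) (A : Set V) : Set V :=
  {x | zp φ z (-j) x ∈ A}

lemma mem_trS (φ : G →* (X ≃g X)) (z : G) (j m : ℤ) (A : Set V) (o : V) :
    zp φ z m o ∈ trS φ z j A ↔ zp φ z (m - j) o ∈ A := by
  unfold trS
  rw [Set.mem_setOf_eq, ← zp_add]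
  have : -j + m = m - j := by ring
  rw [this]

lemma trS_trS (φ : G →* (X ≃g X)) (z : G) (i j : ℤ) (A : Set V) :
    trS φ z i (trS φ z j A) = trS φ z (i + j) A := by
  unfold trS
  ext x
  rw [Set.mem_setOf_eq, Set.mem_setOf_eq, Set.mem_setOf_eq, ← zp_add]
  have : -j + -i = -(i + j) := by ring
  rw [this]

lemma trS_zero (φ : G →* (X ≃g X)) (z : G) (A : Set V) : trS φ z 0 A = A := by
  unfold trS
  ext x
  rw [Set.mem_setOf_eq, neg_zero, zp_zero]

lemma trS_compl (φ : G →* (X ≃g X)) (z : G) (j : ℤ) (A : Set V) :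
    trS φ z j Aᶜ = (trS φ z j A)ᶜ := rfl

lemma trS_wform (hX : MedianGraph X) (φ : G →* (X ≃g X)) (z : G) (j : ℤ) {A : Set V}
    (hA : Wform X A) : Wform X (trS φ z j A) := by
  obtain ⟨u, v, huv, rfl⟩ := hA
  refine ⟨zp φ z j u, zp φ z j v, zp_adj φ z j huv, ?_⟩
  ext x
  unfold trS Wside
  simp only [Set.mem_setOf_eq]
  rw [← zp_dist hX.1 φ z j (zp φ z (-j) x) u, ← zp_dist hX.1 φ z j (zp φ z (-j) x) v,
    zp_cancel' φ z j x]

lemma trS_periodic_dvd (φ : G →* (X ≃g X)) (z : G) {p : ℤ} {A : Set V}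
    (hp : trS φ z p A = A) : ∀ c : ℤ, trS φ z (p * c) A = A := by
  have hneg : trS φ z (-p) A = A := by
    conv_lhs => rw [← hp]
    rw [trS_trS, neg_add_cancel, trS_zero]
  intro c
  induction c using Int.induction_on with
  | zero => rw [mul_zero, trS_zero]
  | succ k ih =>
    have : p * (k + 1 : ℤ) = p + p * k := by ring
    rw [this, ← trS_trS, ih, hp]
  | pred k ih =>
    have : p * (-k - 1 : ℤ) = -p + p * (-k) := by ring
    rw [this, ← trS_trS, ih, hneg]

end Action

/-! ### The divisibility ultrafilter on `ℤ` -/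

/-- Basic sets: multiples of `m!` of large absolute value. -/
def Asets (m : ℕ) : Set ℤ := {n | ((m.factorial : ℤ) ∣ n) ∧ (m : ℤ) ≤ n}

lemma Asets_antitone {m₁ m₂ : ℕ} (h : m₁ ≤ m₂) : Asets m₂ ⊆ Asets m₁ := by
  rintro n ⟨hd, hb⟩
  refine ⟨dvd_trans ?_ hd, le_trans (by exact_mod_cast h) hb⟩
  exact_mod_cast Nat.factorial_dvd_factorial h

/-- A filter of "highly divisible large" integers. -/
def dFilter : Filter ℤ := ⨅ m : ℕ, Filter.principal (Asets m)

lemma Asets_nonempty (m : ℕ) : (Asets m).Nonempty := by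
  refine ⟨(m.factorial : ℤ) * m, ⟨Dvd.intro m rfl, ?_⟩⟩
  have h1 : 1 ≤ m.factorial := Nat.one_le_iff_ne_zero.mpr (Nat.factorial_ne_zero m)
  rcases Nat.eq_zero_or_pos m with h | h
  · simp [h]
  · have : (m : ℤ) * 1 ≤ (m.factorial : ℤ) * m := by
      rw [mul_comm (m : ℤ) 1]
      apply mul_le_mul <;> omega
    omega

lemma dFilter_neBot : dFilter.NeBot := by
  apply Filter.iInf_neBot_of_directed
  · intro m₁ m₂
    refine ⟨max m₁ m₂, ?_, ?_⟩ <;>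
      · simp only [Filter.le_principal_iff, Filter.mem_principal]
        exact Asets_antitone (by omega)
  · intro m
    exact Filter.principal_neBot_iff.mpr (Asets_nonempty m)

/-- The fixed ultrafilter refining the divisibility filter. -/
noncomputable def dUlt : Ultrafilter ℤ :=
  @Ultrafilter.of ℤ dFilter dFilter_neBot

lemma dUlt_le : (dUlt : Filter ℤ) ≤ dFilter :=
  @Ultrafilter.of_le ℤ dFilter dFilter_neBot

lemma Asets_mem (m : ℕ) : Asets m ∈ dUlt :=
  dUlt_le (Filter.mem_iInf_of_mem m (Filter.mem_principal_self _))

lemma dUlt_eventually_dvd (m : ℤ) (hm : m ≠ 0) : ∀ᶠ n in (dUlt : Filter ℤ), m ∣ n := by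
  filter_upwards [Asets_mem m.natAbs] with n hn
  refine dvd_trans ?_ hn.1
  have h1 : m.natAbs ∣ m.natAbs.factorial :=
    Nat.dvd_factorial (Nat.pos_of_ne_zero (Int.natAbs_ne_zero.mpr hm)) le_rfl
  have h2 : (m.natAbs : ℤ) ∣ (m.natAbs.factorial : ℤ) := Int.natCast_dvd_natCast.mpr h1
  exact dvd_trans (Int.dvd_natAbs.mpr (dvd_refl m)) h2
lemma dUlt_eventually_ge (N : ℤ) : ∀ᶠ n in (dUlt : Filter ℤ), N ≤ n := by
  filter_upwards [Asets_mem N.toNat] with n hn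
  have := hn.2
  omega

lemma dUlt_eventually_abs (N : ℤ) : ∀ᶠ n in (dUlt : Filter ℤ), N ≤ |n| := by
  filter_upwards [dUlt_eventually_ge N] with n hn
  rcases abs_cases n with ⟨h1, h2⟩ | ⟨h1, h2⟩ <;> omega

lemma dUlt_eventually_notin {E : Set ℤ} (hE : E.Finite) :
    ∀ᶠ n in (dUlt : Filter ℤ), n ∉ E := by
  obtain ⟨N, hN⟩ := (hE.image abs).bddAbove
  simp only [upperBounds, Set.mem_image, Set.mem_setOf_eq] at hN
  filter_upwards [dUlt_eventually_abs (N + 1)] with n hn hmem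
  have : |n| ≤ N := hN ⟨n, hmem, rfl⟩
  omega

lemma dUlt_exists_value (f : ℤ → ℤ) (C : ℤ) (hC : ∀ n, |f n| ≤ C) :
    ∃ v, ∀ᶠ n in (dUlt : Filter ℤ), f n = v := by
  have key : ∀ (s : Finset ℤ), (∀ᶠ n in (dUlt : Filter ℤ), f n ∈ s) →
      ∃ v, ∀ᶠ n in (dUlt : Filter ℤ), f n = v := by
    intro s
    induction s using Finset.induction_on with
    | empty =>
      intro h
      haveI : (dUlt : Filter ℤ).NeBot := dUlt.neBot
      obtain ⟨n, hn⟩ := h.exists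
      simp at hn
    | insert a s hnotmem ih =>
      intro h
      rcases Ultrafilter.mem_or_compl_mem dUlt {n | f n = a} with hmem | hmem
      · exact ⟨a, hmem⟩
      · apply ih
        have h2 : ∀ᶠ n in (dUlt : Filter ℤ), f n ≠ a := hmem
        filter_upwards [h, h2] with n h1 h2
        rcases Finset.mem_insert.mp h1 with h | h
        · exact absurd h h2
        · exact h
  apply key (Finset.Icc (-C) C)
  apply Filter.Eventually.of_forall
  intro n
  rw [Finset.mem_Icc]
  have := hC n
  rw [abs_le] at this
  exact this

lemma dUlt_value_unique {f : ℤ → ℤ} {v₁ v₂ : ℤ}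
    (h1 : ∀ᶠ n in (dUlt : Filter ℤ), f n = v₁)
    (h2 : ∀ᶠ n in (dUlt : Filter ℤ), f n = v₂) : v₁ = v₂ := by
  haveI : (dUlt : Filter ℤ).NeBot := dUlt.neBot
  obtain ⟨n, hn1, hn2⟩ := (h1.and h2).exists
  rw [← hn1, ← hn2]

/-- Integer indicator of a proposition. -/
noncomputable def indZ (p : Prop) : ℤ :=
  @ite _ p (Classical.dec p) 1 0

lemma indZ_of (p : Prop) (h : p) : indZ p = 1 := by unfold indZ; rw [if_pos h]

lemma indZ_of_not (p : Prop) (h : ¬ p) : indZ p = 0 := by unfold indZ; rw [if_neg h]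

lemma indZ_congr {p q : Prop} (h : p ↔ q) : indZ p = indZ q := by
  by_cases hp : p
  · rw [indZ_of p hp, indZ_of q (h.mp hp)]
  · rw [indZ_of_not p hp, indZ_of_not q (fun hq => hp (h.mpr hq))]

lemma indZ_nonneg (p : Prop) : 0 ≤ indZ p := by
  by_cases hp : p
  · rw [indZ_of p hp]; omega
  · rw [indZ_of_not p hp]

lemma indZ_le_one (p : Prop) : indZ p ≤ 1 := by
  by_cases hp : p
  · rw [indZ_of p hp]
  · rw [indZ_of_not p hp]; omega

/-- The `dUlt`-limit value of an integer-valued function. -/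
noncomputable def oval (f : ℤ → ℤ) : ℤ :=
  @dite _ (∃ v, ∀ᶠ n in (dUlt : Filter ℤ), f n = v) (Classical.dec _)
    (fun h => h.choose) (fun _ => 0)

lemma oval_spec {f : ℤ → ℤ} (h : ∃ v, ∀ᶠ n in (dUlt : Filter ℤ), f n = v) :
    ∀ᶠ n in (dUlt : Filter ℤ), f n = oval f := by
  unfold oval
  rw [dif_pos h]
  exact h.choose_spec

lemma oval_eq {f : ℤ → ℤ} {v : ℤ} (h : ∀ᶠ n in (dUlt : Filter ℤ), f n = v) :
    oval f = v :=
  dUlt_value_unique (oval_spec ⟨v, h⟩) h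

section MainA

variable {G : Type*} [Group G]

lemma seps_fin (hX : MedianGraph X) (a b : V) : (Seps X a b).Finite :=
  (seps_finite_card hX _ a b rfl).1

lemma seps_card (hX : MedianGraph X) (a b : V) : (Seps X a b).ncard = X.dist a b :=
  (seps_finite_card hX _ a b rfl).2

lemma trS_inj (φ : G →* (X ≃g X)) (z : G) {A : Set V}
    (hnp : ∀ p : ℤ, p ≠ 0 → trS φ z p A ≠ A) :
    Function.Injective (fun j : ℤ => trS φ z j A) := by
  intro a b hab
  by_contra hne
  apply hnp (a - b) (by omega)
  simp only at hab
  have h1 : trS φ z (-b) (trS φ z a A) = trS φ z (-b) (trS φ z b A) := by rw [hab]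
  rw [trS_trS, trS_trS, neg_add_cancel, trS_zero] at h1
  have h2 : -b + a = a - b := by ring
  rwa [h2] at h1

lemma mem_trS_o (φ : G →* (X ≃g X)) (z : G) (j : ℤ) (A : Set V) (y : V) :
    y ∈ trS φ z j A ↔ zp φ z (-j) y ∈ A := Iff.rfl

/-- For a `ζ`-aperiodic halfspace, membership of the two orbits agrees outside a
finite set of times. -/
lemma perwall_exceptional (hX : MedianGraph X) (φ : G →* (X ≃g X)) (z : G) (o y : V)
    {A : Set V} (hA : Wform X A) (hnp : ∀ p : ℤ, p ≠ 0 → trS φ z p A ≠ A) :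
    {n : ℤ | ¬ ((zp φ z n y ∈ A) ↔ (zp φ z n o ∈ A))}.Finite := by
  have hsub : {n : ℤ | ¬ ((zp φ z n y ∈ A) ↔ (zp φ z n o ∈ A))} ⊆
      (fun n : ℤ => trS φ z (-n) A) ⁻¹' (Seps X o y ∪ Seps X y o) := by
    intro n hn
    simp only [Set.mem_setOf_eq] at hn
    have hy : y ∈ trS φ z (-n) A ↔ zp φ z n y ∈ A := by
      rw [mem_trS_o, neg_neg]
    have ho : o ∈ trS φ z (-n) A ↔ zp φ z n o ∈ A := by
      rw [mem_trS_o, neg_neg]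
    have hW : Wform X (trS φ z (-n) A) := trS_wform hX φ z (-n) hA
    simp only [Set.mem_preimage, Set.mem_union, Seps, Set.mem_setOf_eq]
    by_cases h1 : zp φ z n y ∈ A
    · have h2 : ¬ zp φ z n o ∈ A := fun h => hn ⟨fun _ => h, fun _ => h1⟩
      left
      exact ⟨hW, fun hc => h2 (ho.mp hc), hy.mpr h1⟩
    · have h2 : zp φ z n o ∈ A := by
        by_contra h2
        exact hn ⟨fun h => absurd h h1, fun h => absurd h h2⟩
      right
      exact ⟨hW, fun hc => h1 (hy.mp hc), ho.mpr h2⟩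
  have hfin : ((Seps X o y) ∪ (Seps X y o)).Finite :=
    (seps_fin hX o y).union (seps_fin hX y o)
  have hinj : Set.InjOn (fun n : ℤ => trS φ z (-n) A)
      ((fun n : ℤ => trS φ z (-n) A) ⁻¹' (Seps X o y ∪ Seps X y o)) := by
    intro a _ b _ hab
    have h3 : (-a : ℤ) = -b := trS_inj φ z hnp (by simpa using hab)
    omega
  exact (hfin.preimage hinj).subset hsub

/-- Per-wall comparison for the cocycle identity. -/
lemma perwall (hX : MedianGraph X) (φ : G →* (X ≃g X)) (z : G) (o y : V) {A : Set V}
    (hA : Wform X A) :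
    ∀ᶠ n in (dUlt : Filter ℤ),
      indZ (zp φ z n y ∈ A) - indZ (zp φ z (-n) y ∈ A)
        = indZ (zp φ z n o ∈ A) - indZ (zp φ z (-n) o ∈ A) := by
  by_cases hper : ∃ p : ℤ, p ≠ 0 ∧ trS φ z p A = A
  · obtain ⟨p, hp0, hp⟩ := hper
    have key : ∀ n : ℤ, p ∣ n → ∀ x : V, (zp φ z n x ∈ A ↔ x ∈ A) := by
      rintro n ⟨c, rfl⟩ x
      have htr := trS_periodic_dvd φ z hp c
      constructor
      · intro h
        have h2 : zp φ z (p * c) x ∈ trS φ z (p * c) A := by rw [htr]; exact h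
        have h3 : zp φ z (-(p * c)) (zp φ z (p * c) x) ∈ A := h2
        rwa [zp_cancel] at h3
      · intro h
        have h2 : zp φ z (p * c) x ∈ trS φ z (p * c) A := by
          show zp φ z (-(p * c)) (zp φ z (p * c) x) ∈ A
          rwa [zp_cancel]
        rwa [htr] at h2
    filter_upwards [dUlt_eventually_dvd p hp0] with n hn
    have hn' : p ∣ -n := by exact Dvd.dvd.neg_right hn
    rw [indZ_congr (key n hn y), indZ_congr (key (-n) hn' y),
      indZ_congr (key n hn o), indZ_congr (key (-n) hn' o)]
    ring
  · push_neg at hper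
    have hnp : ∀ p : ℤ, p ≠ 0 → trS φ z p A ≠ A := hper
    have hf1 := perwall_exceptional hX φ z o y hA hnp
    have hf2 : {n : ℤ | ¬ ((zp φ z (-n) y ∈ A) ↔ (zp φ z (-n) o ∈ A))}.Finite := by
      have : {n : ℤ | ¬ ((zp φ z (-n) y ∈ A) ↔ (zp φ z (-n) o ∈ A))} =
          (fun n : ℤ => -n) ⁻¹' {n : ℤ | ¬ ((zp φ z n y ∈ A) ↔ (zp φ z n o ∈ A))} := by
        ext n; simp
      rw [this]
      exact hf1.preimage (fun a _ b _ h => by omega)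
    filter_upwards [dUlt_eventually_notin hf1, dUlt_eventually_notin hf2] with n h1 h2
    simp only [Set.mem_setOf_eq, not_not] at h1 h2
    rw [indZ_congr h1, indZ_congr h2]

lemma dist_sym (hc : X.Connected) (φ : G →* (X ≃g X)) (z : G) (o : V) (n : ℤ) :
    X.dist o (zp φ z (-n) o) = X.dist o (zp φ z n o) := by
  have h1 : X.dist o (zp φ z (-n) o)
      = X.dist (zp φ z n o) (zp φ z n (zp φ z (-n) o)) :=
    (zp_dist hc φ z n o (zp φ z (-n) o)).symm
  rw [h1, zp_cancel', dcomm]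

lemma edge_dec (hX : MedianGraph X) {x x' : V} (hadj : X.Adj x x') (c : V) :
    (X.dist x c : ℤ) - X.dist x' c = 1 - 2 * indZ (c ∈ Wside X x x') := by
  by_cases hmem : c ∈ Wside X x x'
  · rw [indZ_of _ hmem]
    have h : X.dist c x' = X.dist c x + 1 := (mem_W_iff hX.1 hadj).mp hmem
    rw [dcomm X x c, dcomm X x' c, h]
    push_cast
    ring
  · rw [indZ_of_not _ hmem]
    have h' : c ∈ Wside X x' x := (not_mem_W_iff hX hadj).mp hmem
    have h : X.dist c x = X.dist c x' + 1 := (mem_W_iff hX.1 hadj.symm).mp h'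
    rw [dcomm X x c, dcomm X x' c, h]
    push_cast
    ring

/-- The two-sided Busemann cocycle is asymptotically independent of the orbit
used to compute it. -/
lemma psi_indep (hX : MedianGraph X) (φ : G →* (X ≃g X)) (z : G) (o : V) :
    ∀ (k : ℕ) (x : V), X.dist o x = k → ∀ y : V,
    ∀ᶠ n in (dUlt : Filter ℤ),
      ((X.dist x (zp φ z n y) : ℤ) - X.dist o (zp φ z n y))
        - ((X.dist x (zp φ z (-n) y) : ℤ) - X.dist o (zp φ z (-n) y))
      = ((X.dist x (zp φ z n o) : ℤ) - X.dist o (zp φ z n o))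
        - ((X.dist x (zp φ z (-n) o) : ℤ) - X.dist o (zp φ z (-n) o)) := by
  have hc := hX.1
  intro k
  induction k using Nat.strong_induction_on with
  | _ k IH =>
    intro x hd y
    rcases Nat.eq_zero_or_pos k with hk | hk
    · subst hk
      have : o = x := hc.dist_eq_zero_iff.mp hd
      subst this
      filter_upwards with n
      ring
    · have hxo : X.dist x o ≠ 0 := by rw [dcomm]; omega
      obtain ⟨x', hadj, hstep⟩ := exists_step hc hxo
      have hd' : X.dist o x' = k - 1 := by
        have h1 : X.dist x o = X.dist o x := dcomm X x o
        have h2 : X.dist o x' = X.dist x' o := dcomm X o x'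
        omega
      have key : ∀ c : V, (X.dist x c : ℤ) - X.dist o c
          = ((X.dist x' c : ℤ) - X.dist o c) + (1 - 2 * indZ (c ∈ Wside X x x')) := by
        intro c
        have := edge_dec hX hadj c
        omega
      filter_upwards [IH (k - 1) (by omega) x' hd' y,
        perwall hX φ z o y (A := Wside X x x') ⟨x, x', hadj, rfl⟩] with n h1 h2
      rw [key (zp φ z n y), key (zp φ z (-n) y), key (zp φ z n o), key (zp φ z (-n) o)]
      omega

lemma phi_inv_apply (φ : G →* (X ≃g X)) (g : G) (x : V) : (φ g⁻¹) ((φ g) x) = x := by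
  have h : φ g⁻¹ * φ g = 1 := by rw [← map_mul, inv_mul_cancel, map_one]
  have h2 : (φ g⁻¹ * φ g) x = (1 : X ≃g X) x := by rw [h]
  exact h2

lemma theta_exists (hX : MedianGraph X) (φ : G →* (X ≃g X)) (z : G) (o x : V) :
    ∃ v, ∀ᶠ n in (dUlt : Filter ℤ),
      (X.dist x (zp φ z n o) : ℤ) - X.dist x (zp φ z (-n) o) = v := by
  have hc := hX.1
  apply dUlt_exists_value _ (2 * X.dist o x)
  intro n
  have t1 : X.dist x (zp φ z n o) ≤ X.dist x o + X.dist o (zp φ z n o) := hc.dist_triangle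
  have t2 : X.dist o (zp φ z n o) ≤ X.dist o x + X.dist x (zp φ z n o) := hc.dist_triangle
  have t3 : X.dist x (zp φ z (-n) o) ≤ X.dist x o + X.dist o (zp φ z (-n) o) :=
    hc.dist_triangle
  have t4 : X.dist o (zp φ z (-n) o) ≤ X.dist o x + X.dist x (zp φ z (-n) o) :=
    hc.dist_triangle
  have hsym := dist_sym hc φ z o n
  have hco : X.dist x o = X.dist o x := dcomm X x o
  rw [abs_le]
  omega

/-- The homomorphism `Θ : G → ℤ`. -/
noncomputable def Theta (φ : G →* (X ≃g X)) (z : G) (o : V) (g : G) : ℤ :=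
  oval (fun n => (X.dist ((φ g) o) (zp φ z n o) : ℤ) - X.dist ((φ g) o) (zp φ z (-n) o))

lemma theta_spec (hX : MedianGraph X) (φ : G →* (X ≃g X)) (z : G) (o : V) (g : G) :
    ∀ᶠ n in (dUlt : Filter ℤ),
      (X.dist ((φ g) o) (zp φ z n o) : ℤ) - X.dist ((φ g) o) (zp φ z (-n) o)
        = Theta φ z o g :=
  oval_spec (theta_exists hX φ z o ((φ g) o))

lemma theta_one (hX : MedianGraph X) (φ : G →* (X ≃g X)) (z : G) (o : V) :
    Theta φ z o 1 = 0 := by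
  unfold Theta
  apply oval_eq
  filter_upwards with n
  rw [map_one]
  have h1 : (1 : X ≃g X) o = o := rfl
  rw [h1, dist_sym hX.1 φ z o n]
  ring

lemma conj_dist (hX : MedianGraph X) (φ : G →* (X ≃g X)) {z : G}
    (hz : z ∈ Subgroup.center G) (g : G) (a : V) (n : ℤ) (b : V) :
    X.dist ((φ g) a) (zp φ z n b) = X.dist a (zp φ z n ((φ g⁻¹) b)) := by
  have h1 : X.dist ((φ g) a) (zp φ z n b)
      = X.dist ((φ g⁻¹) ((φ g) a)) ((φ g⁻¹) (zp φ z n b)) :=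
    (iso_dist hX.1 (φ g⁻¹) _ _).symm
  rw [h1, phi_inv_apply, zp_comm φ hz g⁻¹ n b]

lemma theta_mul (hX : MedianGraph X) (φ : G →* (X ≃g X)) {z : G}
    (hz : z ∈ Subgroup.center G) (o : V) (g h : G) :
    Theta φ z o (g * h) = Theta φ z o g + Theta φ z o h := by
  have hc := hX.1
  have hgh : ∀ n : ℤ,
      X.dist ((φ (g * h)) o) (zp φ z n o) = X.dist ((φ h) o) (zp φ z n ((φ g⁻¹) o)) := by
    intro n
    have h1 : (φ (g * h)) o = (φ g) ((φ h) o) := by rw [map_mul]; rfl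
    rw [h1, conj_dist hX φ hz g ((φ h) o) n o]
  have hg : ∀ n : ℤ,
      X.dist ((φ g) o) (zp φ z n o) = X.dist o (zp φ z n ((φ g⁻¹) o)) := by
    intro n
    rw [conj_dist hX φ hz g o n o]
  apply oval_eq
  filter_upwards [psi_indep hX φ z o (X.dist o ((φ h) o)) ((φ h) o) rfl ((φ g⁻¹) o),
    theta_spec hX φ z o g, theta_spec hX φ z o h] with n hpsi hg' hh'
  rw [hgh n, hgh (-n)]
  rw [hg n, hg (-n)] at hg'
  have hsym := dist_sym hc φ z o n
  omega

end MainA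

lemma ncard_finset_biUnion_le {α β : Type*} (F : Finset α) (T : α → Set β) :
    (⋃ a ∈ F, T a).ncard ≤ ∑ a ∈ F, (T a).ncard := by
  classical
  induction F using Finset.induction_on with
  | empty => simp
  | insert a s hnm ih =>
    rw [Finset.set_biUnion_insert, Finset.sum_insert hnm]
    exact le_trans (Set.ncard_union_le _ _) (by omega)

section MainB

variable {G : Type*} [Group G]

lemma trS_neg_eq (φ : G →* (X ≃g X)) (z : G) {p : ℤ} {A : Set V}
    (hp : trS φ z p A = A) : trS φ z (-p) A = A := by
  conv_lhs => rw [← hp]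
  rw [trS_trS, neg_add_cancel, trS_zero]

/-- Discrete intermediate value theorem for predicates on `ℤ`. -/
lemma exists_crossing (P : ℤ → Prop) :
    ∀ (k : ℕ) (a : ℤ), ¬ P a → P (a + (k : ℤ)) →
      ∃ m : ℤ, a ≤ m ∧ m < a + (k : ℤ) ∧ ¬ (P m ↔ P (m + 1)) := by
  intro k
  induction k with
  | zero =>
    intro a h0 h1
    simp only [Nat.cast_zero, add_zero] at h1
    exact absurd h1 h0
  | succ k IH =>
    intro a h0 h1
    have e : a + ((k + 1 : ℕ) : ℤ) = a + (k : ℤ) + 1 := by push_cast; ring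
    rw [e] at h1
    by_cases h : P (a + (k : ℤ))
    · obtain ⟨m, hm1, hm2, hm3⟩ := IH a h0 h
      exact ⟨m, hm1, by push_cast; omega, hm3⟩
    · refine ⟨a + (k : ℤ), by omega, by push_cast; omega, ?_⟩
      intro hiff
      exact h (hiff.mpr h1)

lemma crossing_base (φ : G →* (X ≃g X)) (z : G) (o : V) (hX : MedianGraph X)
    {A : Set V} (hA : Wform X A) {m : ℤ}
    (hcr : ¬ ((zp φ z m o ∈ A) ↔ (zp φ z (m + 1) o ∈ A))) :
    trS φ z (-m) A ∈ Seps X o (zp φ z 1 o) ∪ Seps X (zp φ z 1 o) o := by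
  have hW : Wform X (trS φ z (-m) A) := trS_wform hX φ z (-m) hA
  have ho : o ∈ trS φ z (-m) A ↔ zp φ z m o ∈ A := by
    rw [mem_trS_o, neg_neg]
  have h1 : zp φ z 1 o ∈ trS φ z (-m) A ↔ zp φ z (m + 1) o ∈ A := by
    rw [mem_trS φ z (-m) 1 A o]
    have e : (1 : ℤ) - -m = m + 1 := by ring
    rw [e]
  by_cases hm : zp φ z m o ∈ A
  · have hm1 : ¬ zp φ z (m + 1) o ∈ A := fun h => hcr ⟨fun _ => h, fun _ => hm⟩
    right
    exact ⟨hW, fun hc => hm1 (h1.mp hc), ho.mpr hm⟩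
  · have hm1 : zp φ z (m + 1) o ∈ A := by
      by_contra h
      exact hcr ⟨fun hh => absurd hh hm, fun hh => absurd hh h⟩
    left
    exact ⟨hW, fun hc => hm (ho.mp hc), h1.mpr hm1⟩

lemma crossings_finite (φ : G →* (X ≃g X)) (z : G) (o : V) (hX : MedianGraph X)
    {A : Set V} (hA : Wform X A) (hnp : ∀ p : ℤ, p ≠ 0 → trS φ z p A ≠ A) :
    {m : ℤ | ¬ ((zp φ z m o ∈ A) ↔ (zp φ z (m + 1) o ∈ A))}.Finite := by
  have hsub : {m : ℤ | ¬ ((zp φ z m o ∈ A) ↔ (zp φ z (m + 1) o ∈ A))} ⊆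
      (fun m : ℤ => trS φ z (-m) A) ⁻¹'
        (Seps X o (zp φ z 1 o) ∪ Seps X (zp φ z 1 o) o) := by
    intro m hm
    exact crossing_base φ z o hX hA hm
  have hfin : (Seps X o (zp φ z 1 o) ∪ Seps X (zp φ z 1 o) o).Finite :=
    (seps_fin hX _ _).union (seps_fin hX _ _)
  have hinj : Set.InjOn (fun m : ℤ => trS φ z (-m) A)
      ((fun m : ℤ => trS φ z (-m) A) ⁻¹'
        (Seps X o (zp φ z 1 o) ∪ Seps X (zp φ z 1 o) o)) := by
    intro a _ b _ hab
    have h3 : (-a : ℤ) = -b := trS_inj φ z hnp (by simpa using hab)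
    omega
  exact (hfin.preimage hinj).subset hsub

/-- Eventual constancy of orbit membership for an aperiodic halfspace. -/
lemma tails (φ : G →* (X ≃g X)) (z : G) (o : V) (hX : MedianGraph X)
    {A : Set V} (hA : Wform X A) (hnp : ∀ p : ℤ, p ≠ 0 → trS φ z p A ≠ A) :
    ∃ N : ℕ, 1 ≤ N ∧
      (∀ m : ℤ, (N : ℤ) ≤ m → ((zp φ z m o ∈ A) ↔ (zp φ z (N : ℤ) o ∈ A))) ∧
      (∀ m : ℤ, m ≤ -(N : ℤ) → ((zp φ z m o ∈ A) ↔ (zp φ z (-(N : ℤ)) o ∈ A))) := by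
  obtain ⟨N₀, hN₀⟩ := ((crossings_finite φ z o hX hA hnp).image abs).bddAbove
  have hnc : ∀ m : ℤ, ((N₀.toNat + 1 : ℕ) : ℤ) ≤ |m| →
      ((zp φ z m o ∈ A) ↔ (zp φ z (m + 1) o ∈ A)) := by
    intro m hm
    by_contra h
    have hb : |m| ≤ N₀ := hN₀ (Set.mem_image_of_mem abs h)
    push_cast at hm
    omega
  refine ⟨N₀.toNat + 1, by omega, ?_, ?_⟩
  · intro m hm
    refine Int.le_induction
      (motive := fun m _ => ((zp φ z m o ∈ A) ↔ (zp φ z ((N₀.toNat + 1 : ℕ) : ℤ) o ∈ A)))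
      ?_ ?_ m hm
    · exact Iff.rfl
    · intro n hn ih
      have habs : ((N₀.toNat + 1 : ℕ) : ℤ) ≤ |n| := by
        rcases abs_cases n with ⟨e1, e2⟩ | ⟨e1, e2⟩ <;> push_cast at hn ⊢ <;> omega
      exact ((hnc n habs).symm).trans ih
  · intro m hm
    refine Int.le_induction_down
      (motive := fun m _ => ((zp φ z m o ∈ A) ↔ (zp φ z (-((N₀.toNat + 1 : ℕ) : ℤ)) o ∈ A)))
      ?_ ?_ m hm
    · exact Iff.rfl
    · intro n hn ih
      have habs : ((N₀.toNat + 1 : ℕ) : ℤ) ≤ |n - 1| := by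
        rcases abs_cases (n - 1) with ⟨e1, e2⟩ | ⟨e1, e2⟩ <;> push_cast at hn ⊢ <;> omega
      have hcr := hnc (n - 1) habs
      have e : n - 1 + 1 = n := by ring
      rw [e] at hcr
      exact hcr.trans ih

/-- A halfspace eventually entered by the forward orbit and eventually left by
the backward orbit. -/
def SkewWall (φ : G →* (X ≃g X)) (z : G) (o : V) (A : Set V) (N : ℕ) : Prop :=
  Wform X A ∧ (∀ m : ℤ, (N : ℤ) ≤ m → zp φ z m o ∈ A) ∧
    (∀ m : ℤ, m ≤ -(N : ℤ) → zp φ z m o ∉ A)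

lemma icc_ncard (a b : ℤ) : (Set.Icc a b).ncard = (b + 1 - a).toNat := by
  rw [← Finset.coe_Icc, Set.ncard_coe_finset, Int.card_Icc]

lemma ico_ncard (a b : ℤ) : (Set.Ico a b).ncard = (b - a).toNat := by
  rw [← Finset.coe_Ico, Set.ncard_coe_finset, Int.card_Ico]

lemma bounded_of_no_skew (φ : G →* (X ≃g X)) (z : G) (o : V) (hX : MedianGraph X)
    (hno : ∀ (A : Set V) (N : ℕ), ¬ SkewWall φ z o A N) :
    BddAbove (Set.range fun n : ℤ => X.dist o (zp φ z n o)) := by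
  classical
  have hc := hX.1
  have hBfin : (Seps X o (zp φ z 1 o) ∪ Seps X (zp φ z 1 o) o).Finite :=
    (seps_fin hX _ _).union (seps_fin hX _ _)
  set F : Finset (Set V) := hBfin.toFinset with hF
  have hperA : ∀ A : Set V, ∃ K : ℕ,
      A ∈ Seps X o (zp φ z 1 o) ∪ Seps X (zp φ z 1 o) o →
      ∀ n : ℤ,
        {B | (∃ j : ℤ, B = trS φ z j A) ∧ B ∈ Seps X o (zp φ z n o)}.ncard ≤ K := by
    intro A
    by_cases hAmem : A ∈ Seps X o (zp φ z 1 o) ∪ Seps X (zp φ z 1 o) o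
    swap
    · exact ⟨0, fun h => absurd h hAmem⟩
    have hA : Wform X A := by rcases hAmem with h | h; exacts [h.1, h.1]
    by_cases hper : ∃ p : ℤ, p ≠ 0 ∧ trS φ z p A = A
    · obtain ⟨p, hp0, hp⟩ := hper
      obtain ⟨q, hq0, hq⟩ : ∃ q : ℤ, 0 < q ∧ trS φ z q A = A := by
        rcases lt_or_gt_of_ne hp0 with h | h
        · exact ⟨-p, by omega, trS_neg_eq φ z hp⟩
        · exact ⟨p, h, hp⟩
      refine ⟨q.toNat, fun _ n => ?_⟩
      have hsub : {B | (∃ j : ℤ, B = trS φ z j A) ∧ B ∈ Seps X o (zp φ z n o)} ⊆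
          (fun r : ℤ => trS φ z r A) '' (Set.Ico (0 : ℤ) q) := by
        rintro B ⟨⟨j, rfl⟩, -⟩
        refine ⟨j % q, ⟨Int.emod_nonneg j (by omega), Int.emod_lt_of_pos j hq0⟩, ?_⟩
        have hdecomp : j % q + q * (j / q) = j := Int.emod_add_mul_ediv j q
        calc trS φ z (j % q) A
            = trS φ z (j % q) (trS φ z (q * (j / q)) A) := by
              rw [trS_periodic_dvd φ z hq (j / q)]
          _ = trS φ z (j % q + q * (j / q)) A := trS_trS φ z _ _ A
          _ = trS φ z j A := by rw [hdecomp]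
      calc {B | (∃ j : ℤ, B = trS φ z j A) ∧ B ∈ Seps X o (zp φ z n o)}.ncard
          ≤ ((fun r : ℤ => trS φ z r A) '' (Set.Ico (0 : ℤ) q)).ncard :=
            Set.ncard_le_ncard hsub ((Set.finite_Ico _ _).image _)
        _ ≤ (Set.Ico (0 : ℤ) q).ncard := Set.ncard_image_le (Set.finite_Ico _ _)
        _ = q.toNat := by rw [ico_ncard]; omega
    · push_neg at hper
      have hnp : ∀ p : ℤ, p ≠ 0 → trS φ z p A ≠ A := hper
      obtain ⟨N, hN1, hup, hdn⟩ := tails φ z o hX hA hnp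
      have hvv : (zp φ z (N : ℤ) o ∈ A) ↔ (zp φ z (-(N : ℤ)) o ∈ A) := by
        by_contra hiff
        by_cases hvp : zp φ z (N : ℤ) o ∈ A
        · have hvm : zp φ z (-(N : ℤ)) o ∉ A := fun h => hiff ⟨fun _ => h, fun _ => hvp⟩
          exact hno A N ⟨hA, fun m hm => (hup m hm).mpr hvp,
            fun m hm h => hvm ((hdn m hm).mp h)⟩
        · have hvm : zp φ z (-(N : ℤ)) o ∈ A := by
            by_contra h
            exact hiff ⟨fun hh => absurd hh hvp, fun hh => absurd hh h⟩
          refine hno Aᶜ N ⟨wform_compl hX hA, ?_, ?_⟩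
          · intro m hm
            exact fun h => hvp ((hup m hm).mp h)
          · intro m hm h
            exact h ((hdn m hm).mpr hvm)
      have h2s : ∀ m : ℤ, (N : ℤ) ≤ |m| → ((zp φ z m o ∈ A) ↔ (zp φ z (N : ℤ) o ∈ A)) := by
        intro m hm
        rcases abs_cases m with ⟨e1, e2⟩ | ⟨e1, e2⟩
        · exact hup m (by omega)
        · exact (hdn m (by omega)).trans hvv.symm
      refine ⟨2 * (2 * N + 1), fun _ n => ?_⟩
      have hsub : {B | (∃ j : ℤ, B = trS φ z j A) ∧ B ∈ Seps X o (zp φ z n o)} ⊆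
          (fun j : ℤ => trS φ z j A) ''
            (Set.Icc (-(N : ℤ)) N ∪ Set.Icc (n - N) (n + N)) := by
        rintro B ⟨⟨j, rfl⟩, hW, hBo, hBn⟩
        have hoB : ¬ zp φ z (-j) o ∈ A := fun h => hBo ((mem_trS_o φ z j A o).mpr h)
        have hnB : zp φ z (n - j) o ∈ A := (mem_trS φ z j n A o).mp hBn
        by_cases hj : (N : ℤ) ≤ |(-j)|
        · by_cases hj2 : (N : ℤ) ≤ |n - j|
          · exact absurd ((h2s (-j) hj).trans (h2s (n - j) hj2).symm |>.mpr hnB) hoB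
          · refine ⟨j, Or.inr ?_, rfl⟩
            rcases abs_cases (n - j) with ⟨e1, e2⟩ | ⟨e1, e2⟩ <;>
              (constructor <;> omega)
        · refine ⟨j, Or.inl ?_, rfl⟩
          rcases abs_cases (-j) with ⟨e1, e2⟩ | ⟨e1, e2⟩ <;> (constructor <;> omega)
      calc {B | (∃ j : ℤ, B = trS φ z j A) ∧ B ∈ Seps X o (zp φ z n o)}.ncard
          ≤ ((fun j : ℤ => trS φ z j A) ''
              (Set.Icc (-(N : ℤ)) N ∪ Set.Icc (n - N) (n + N))).ncard :=
            Set.ncard_le_ncard hsub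
              (((Set.finite_Icc _ _).union (Set.finite_Icc _ _)).image _)
        _ ≤ (Set.Icc (-(N : ℤ)) N ∪ Set.Icc (n - N) (n + N)).ncard :=
            Set.ncard_image_le ((Set.finite_Icc _ _).union (Set.finite_Icc _ _))
        _ ≤ (Set.Icc (-(N : ℤ)) N).ncard + (Set.Icc (n - N) (n + N)).ncard :=
            Set.ncard_union_le _ _
        _ ≤ 2 * (2 * N + 1) := by rw [icc_ncard, icc_ncard]; omega
  choose K hK using hperA
  have main : ∀ n : ℤ, 0 ≤ n → X.dist o (zp φ z n o) ≤ ∑ A ∈ F, K A := by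
    intro n hn
    rcases eq_or_lt_of_le hn with h0 | hpos
    · rw [← h0]
      have e : zp φ z 0 o = o := zp_zero φ z o
      rw [e, SimpleGraph.dist_self]
      omega
    · rw [← seps_card hX o (zp φ z n o)]
      set T : Set V → Set (Set V) :=
        fun A => {B | (∃ j : ℤ, B = trS φ z j A) ∧ B ∈ Seps X o (zp φ z n o)} with hT
      have hcover : Seps X o (zp φ z n o) ⊆ ⋃ A ∈ F, T A := by
        intro A' hA'
        obtain ⟨hA'W, hA'o, hA'n⟩ := hA'
        have h0 : ¬ zp φ z 0 o ∈ A' := by rw [zp_zero]; exact hA'o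
        have hn' : zp φ z (0 + (n.toNat : ℤ)) o ∈ A' := by
          have e : (0 : ℤ) + (n.toNat : ℤ) = n := by omega
          rw [e]
          exact hA'n
        obtain ⟨m, -, -, hm3⟩ :=
          exists_crossing (fun m => zp φ z m o ∈ A') n.toNat 0 h0 hn'
        have hbase := crossing_base φ z o hX hA'W hm3
        have hmemF : trS φ z (-m) A' ∈ F := by
          rw [hF, Set.Finite.mem_toFinset]
          exact hbase
        refine Set.mem_biUnion hmemF ?_
        refine ⟨⟨m, ?_⟩, ⟨hA'W, hA'o, hA'n⟩⟩
        rw [trS_trS, add_neg_cancel, trS_zero]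
      have hTfin : ∀ A : Set V, (T A).Finite :=
        fun A => (seps_fin hX o (zp φ z n o)).subset (fun B hB => hB.2)
      calc (Seps X o (zp φ z n o)).ncard
          ≤ (⋃ A ∈ F, T A).ncard :=
            Set.ncard_le_ncard hcover
              (Set.Finite.biUnion F.finite_toSet (fun A _ => hTfin A))
        _ ≤ ∑ A ∈ F, (T A).ncard := ncard_finset_biUnion_le F T
        _ ≤ ∑ A ∈ F, K A := by
            apply Finset.sum_le_sum
            intro A hAF
            exact hK A (by rwa [hF, Set.Finite.mem_toFinset] at hAF) n
  refine ⟨(∑ A ∈ F, K A : ℕ), ?_⟩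
  rintro b ⟨n, rfl⟩
  rcases le_or_gt 0 n with hn | hn
  · exact main n hn
  · have h := dist_sym hc φ z o (-n)
    rw [neg_neg] at h
    simp only
    rw [h]
    exact main (-n) (by omega)

end MainB

section MainC

variable {G : Type*} [Group G]

lemma zp_mem_of_dvd (φ : G →* (X ≃g X)) (z : G) {p n : ℤ} (hdvd : p ∣ n)
    {A : Set V} (hp : trS φ z p A = A) (x : V) : zp φ z n x ∈ A ↔ x ∈ A := by
  obtain ⟨c, rfl⟩ := hdvd
  have htr := trS_periodic_dvd φ z hp c
  constructor
  · intro h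
    have h2 : zp φ z (p * c) x ∈ trS φ z (p * c) A := by rw [htr]; exact h
    have h3 : zp φ z (-(p * c)) (zp φ z (p * c) x) ∈ A := h2
    rwa [zp_cancel] at h3
  · intro h
    have h2 : zp φ z (p * c) x ∈ trS φ z (p * c) A := by
      show zp φ z (-(p * c)) (zp φ z (p * c) x) ∈ A
      rwa [zp_cancel]
    rwa [htr] at h2

/-- The asymptotic direction of a halfspace relative to the orbit. -/
noncomputable def tval (φ : G →* (X ≃g X)) (z : G) (o : V) (S : Set V) : ℤ :=
  oval (fun n => indZ (zp φ z n o ∈ S) - indZ (zp φ z (-n) o ∈ S))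

lemma tval_exists (φ : G →* (X ≃g X)) (z : G) (o : V) (S : Set V) :
    ∃ v, ∀ᶠ n in (dUlt : Filter ℤ),
      indZ (zp φ z n o ∈ S) - indZ (zp φ z (-n) o ∈ S) = v := by
  apply dUlt_exists_value _ 1
  intro n
  have h1 := indZ_nonneg (zp φ z n o ∈ S)
  have h2 := indZ_le_one (zp φ z n o ∈ S)
  have h3 := indZ_nonneg (zp φ z (-n) o ∈ S)
  have h4 := indZ_le_one (zp φ z (-n) o ∈ S)
  rw [abs_le]
  omega

lemma tval_spec (φ : G →* (X ≃g X)) (z : G) (o : V) (S : Set V) :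
    ∀ᶠ n in (dUlt : Filter ℤ),
      indZ (zp φ z n o ∈ S) - indZ (zp φ z (-n) o ∈ S) = tval φ z o S :=
  oval_spec (tval_exists φ z o S)

/-- Existence of a suitable power of `z` on which `Θ` is provably negative. -/
lemma theta_nonzero (hX : MedianGraph X) (φ : G →* (X ≃g X)) {z : G}
    (hz : z ∈ Subgroup.center G) (o : V) {A₀ : Set V} {M : ℕ}
    (hskew : SkewWall φ z o A₀ M) :
    ∃ k : ℕ, 1 ≤ k ∧ Theta φ z o (z ^ k) ≤ -2 := by
  classical
  have hc := hX.1
  obtain ⟨hA₀W, hA₀up, hA₀dn⟩ := hskew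
  have hBfin : (Seps X o (zp φ z 1 o) ∪ Seps X (zp φ z 1 o) o).Finite :=
    (seps_fin hX _ _).union (seps_fin hX _ _)
  set F : Finset (Set V) := hBfin.toFinset with hF
  -- choose per-base tail bounds
  have hNall : ∀ B : Set V, ∃ N : ℕ,
      ((B ∈ Seps X o (zp φ z 1 o) ∪ Seps X (zp φ z 1 o) o) ∧
        (∀ p : ℤ, p ≠ 0 → trS φ z p B ≠ B)) →
      (1 ≤ N ∧
        (∀ m : ℤ, (N : ℤ) ≤ m → ((zp φ z m o ∈ B) ↔ (zp φ z (N : ℤ) o ∈ B))) ∧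
        (∀ m : ℤ, m ≤ -(N : ℤ) → ((zp φ z m o ∈ B) ↔ (zp φ z (-(N : ℤ)) o ∈ B)))) := by
    intro B
    by_cases hBm : (B ∈ Seps X o (zp φ z 1 o) ∪ Seps X (zp φ z 1 o) o) ∧
        (∀ p : ℤ, p ≠ 0 → trS φ z p B ≠ B)
    · have hBW : Wform X B := by rcases hBm.1 with h | h; exacts [h.1, h.1]
      obtain ⟨N, h1, h2, h3⟩ := tails φ z o hX hBW hBm.2
      exact ⟨N, fun _ => ⟨h1, h2, h3⟩⟩
    · exact ⟨1, fun h => absurd h hBm⟩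
  choose Nf hNf using hNall
  set L : ℕ := max (F.sup Nf) M with hL
  set k : ℕ := 2 * L + 1 with hk
  set w : V := zp φ z (k : ℤ) o with hw
  set Sstar : Set V := trS φ z (M : ℤ) A₀ with hSstar
  have hSW : Wform X Sstar := trS_wform hX φ z _ hA₀W
  have hSmem : ∀ m : ℤ, (zp φ z m o ∈ Sstar ↔ zp φ z (m - M) o ∈ A₀) := by
    intro m
    rw [hSstar, mem_trS]
  have hoS : o ∉ Sstar := by
    intro h
    have h1 : zp φ z 0 o ∈ Sstar := by rwa [zp_zero]
    exact hA₀dn (0 - M) (by omega) ((hSmem 0).mp h1)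
  have hwS : w ∈ Sstar := by
    rw [hw]
    exact (hSmem k).mpr (hA₀up ((k : ℤ) - M) (by omega))
  have htvalS : tval φ z o Sstar = 1 := by
    apply oval_eq
    filter_upwards [dUlt_eventually_ge (2 * M)] with n hn
    have h1 : zp φ z n o ∈ Sstar := (hSmem n).mpr (hA₀up (n - M) (by omega))
    have h2 : zp φ z (-n) o ∉ Sstar := by
      intro h
      exact hA₀dn (-n - M) (by omega) ((hSmem (-n)).mp h)
    rw [indZ_of _ h1, indZ_of_not _ h2]
    ring
  -- the sign lemma
  have hsgn : ∀ S : Set V, Wform X S → o ∉ S → w ∈ S → 0 ≤ tval φ z o S := by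
    intro S hSWf hoSn hwSn
    by_cases hper : ∃ p : ℤ, p ≠ 0 ∧ trS φ z p S = S
    · obtain ⟨p, hp0, hp⟩ := hper
      have : tval φ z o S = 0 := by
        apply oval_eq
        filter_upwards [dUlt_eventually_dvd p hp0] with n hn
        rw [indZ_congr (zp_mem_of_dvd φ z hn hp o),
          indZ_congr (zp_mem_of_dvd φ z (Dvd.dvd.neg_right hn) hp o)]
        ring
      omega
    · push_neg at hper
      have h0 : ¬ zp φ z 0 o ∈ S := by rwa [zp_zero]
      have hkS : zp φ z (0 + (k : ℤ)) o ∈ S := by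
        rw [zero_add]; exact hwSn
      obtain ⟨m, hm0, hmk, hm3⟩ :=
        exists_crossing (fun m => zp φ z m o ∈ S) k 0 h0 hkS
      have hbase := crossing_base φ z o hX hSWf hm3
      set B : Set V := trS φ z (-m) S with hB
      have hSeq : S = trS φ z m B := by
        rw [hB, trS_trS, add_neg_cancel, trS_zero]
      have hBnp : ∀ p : ℤ, p ≠ 0 → trS φ z p B ≠ B := by
        intro p hp0 hpB
        apply hper p hp0
        rw [hSeq]
        calc trS φ z p (trS φ z m B) = trS φ z (p + m) B := trS_trS φ z _ _ _
          _ = trS φ z (m + p) B := by rw [add_comm]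
          _ = trS φ z m (trS φ z p B) := (trS_trS φ z _ _ _).symm
          _ = trS φ z m B := by rw [hpB]
      obtain ⟨hNB1, hNBup, hNBdn⟩ := hNf B ⟨hbase, hBnp⟩
      have hNBle : Nf B ≤ L := by
        rw [hL]
        have : Nf B ≤ F.sup Nf := Finset.le_sup (by rw [hF, Set.Finite.mem_toFinset]; exact hbase)
        omega
      -- membership translations
      have hmem : ∀ m' : ℤ, (zp φ z m' o ∈ S ↔ zp φ z (m' - m) o ∈ B) := by
        intro m'
        rw [hSeq, mem_trS]
      -- not perverse
      have hnperv : ¬ ((zp φ z (-(Nf B : ℤ)) o ∈ B) ∧ ¬ (zp φ z (Nf B : ℤ) o ∈ B)) := by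
        rintro ⟨hminus, hplus⟩
        have hc0 : ¬ zp φ z (0 - m) o ∈ B := fun h => h0 ((hmem 0).mpr h)
        have hck : zp φ z ((k : ℤ) - m) o ∈ B := (hmem k).mp (hw ▸ hwSn)
        have hm1 : -m > -(Nf B : ℤ) := by
          by_contra hcon
          push_neg at hcon
          have := (hNBdn (-m) hcon).mpr hminus
          rw [zero_sub] at hc0
          exact hc0 this
        have hm2 : (k : ℤ) - m < (Nf B : ℤ) := by
          by_contra hcon
          push_neg at hcon
          exact hplus ((hNBup _ hcon).mp hck)
        omega
      have htv : tval φ z o S =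
          indZ (zp φ z (Nf B : ℤ) o ∈ B) - indZ (zp φ z (-(Nf B : ℤ)) o ∈ B) := by
        apply oval_eq
        filter_upwards [dUlt_eventually_ge ((Nf B : ℤ) + |m| + 1)] with n hn
        have habs : |m| ≥ 0 := abs_nonneg m
        have hmle : m ≤ |m| := le_abs_self m
        have hmge : -m ≤ |m| := neg_le_abs m
        have e1 : zp φ z n o ∈ S ↔ zp φ z (Nf B : ℤ) o ∈ B := by
          rw [hmem n]
          exact hNBup (n - m) (by omega)
        have e2 : zp φ z (-n) o ∈ S ↔ zp φ z (-(Nf B : ℤ)) o ∈ B := by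
          rw [hmem (-n)]
          exact hNBdn (-n - m) (by omega)
        rw [indZ_congr e1, indZ_congr e2]
      rw [htv]
      by_cases hp : zp φ z (Nf B : ℤ) o ∈ B
      · have := indZ_nonneg (zp φ z (-(Nf B : ℤ)) o ∈ B)
        have := indZ_le_one (zp φ z (-(Nf B : ℤ)) o ∈ B)
        rw [indZ_of _ hp]
        omega
      · have hm : ¬ zp φ z (-(Nf B : ℤ)) o ∈ B := fun h => hnperv ⟨h, hp⟩
        rw [indZ_of_not _ hp, indZ_of_not _ hm]
        omega
  -- the inductive estimate along a geodesic from o to w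
  have hmu : ∀ (j : ℕ) (x : V), X.dist o x = j → Btw X o x w →
      oval (fun n => (X.dist x (zp φ z n o) : ℤ) - X.dist x (zp φ z (-n) o))
        ≤ -2 * indZ (x ∈ Sstar) := by
    intro j
    induction j using Nat.strong_induction_on with
    | _ j IH =>
      intro x hd hbtw
      rcases Nat.eq_zero_or_pos j with hj | hj
      · subst hj
        have hxo : o = x := hc.dist_eq_zero_iff.mp hd
        subst hxo
        have hoval : oval (fun n => (X.dist o (zp φ z n o) : ℤ) - X.dist o (zp φ z (-n) o)) = 0 := by
          apply oval_eq
          filter_upwards with n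
          rw [dist_sym hc φ z o n]
          ring
        rw [hoval, indZ_of_not _ hoS]
        omega
      · have hxo : X.dist x o ≠ 0 := by
          rw [dcomm]
          omega
        obtain ⟨x', hadj, hstep⟩ := exists_step hc hxo
        have hdox : X.dist o x' = j - 1 := by
          have e1 : X.dist x o = X.dist o x := dcomm X x o
          have e2 : X.dist o x' = X.dist x' o := dcomm X o x'
          omega
        have hxx' : X.dist x x' = 1 := SimpleGraph.dist_eq_one_iff_adj.mpr hadj
        have hbtw1 : Btw X o x' x := by
          unfold Btw
          have e2 : X.dist o x' = X.dist x' o := dcomm X o x'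
          have e3 : X.dist x' x = X.dist x x' := dcomm X x' x
          omega
        have hbtw2 : Btw X o x' w := btw_concat hc hbtw1 hbtw
        have hbtw3 : Btw X x' x w := btw_tail hc hbtw hbtw1
        have hSWf : Wform X (Wside X x x') := ⟨x, x', hadj, rfl⟩
        have hoSn : o ∉ Wside X x x' := by
          have : o ∈ Wside X x' x := by
            show X.dist o x' < X.dist o x
            omega
          exact (not_mem_W_iff hX hadj).mpr this
        have hwSn : w ∈ Wside X x x' := by
          show X.dist w x < X.dist w x'
          unfold Btw at hbtw3
          have e1 : X.dist x' w = X.dist w x' := dcomm X x' w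
          have e2 : X.dist x w = X.dist w x := dcomm X x w
          have e3 : X.dist x' x = X.dist x x' := dcomm X x' x
          omega
        -- recursion for the cocycle
        have hovalx : oval (fun n => (X.dist x (zp φ z n o) : ℤ) - X.dist x (zp φ z (-n) o))
            = oval (fun n => (X.dist x' (zp φ z n o) : ℤ) - X.dist x' (zp φ z (-n) o))
              - 2 * tval φ z o (Wside X x x') := by
          apply oval_eq
          filter_upwards [oval_spec (theta_exists hX φ z o x'),
            tval_spec φ z o (Wside X x x')] with n h1 h2
          have e1 := edge_dec hX hadj (zp φ z n o)
          have e2 := edge_dec hX hadj (zp φ z (-n) o)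
          omega
        have hIH := IH (j - 1) (by omega) x' hdox hbtw2
        have htS := hsgn (Wside X x x') hSWf hoSn hwSn
        by_cases hxS : x ∈ Sstar
        · by_cases hx'S : x' ∈ Sstar
          · rw [hovalx, indZ_of _ hxS]
            rw [indZ_of _ hx'S] at hIH
            omega
          · -- the wall S is the skew wall
            obtain ⟨u, v, huv, hSuv⟩ := hSW
            have hSeq : Sstar = Wside X x x' := by
              rw [hSuv]
              rw [hSuv] at hxS hx'S
              exact wall_eq hX huv hadj hxS hx'S
            rw [hovalx, ← hSeq, htvalS, indZ_of _ hxS]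
            rw [indZ_of_not _ hx'S] at hIH
            omega
        · rw [hovalx, indZ_of_not _ hxS]
          have := indZ_nonneg (x' ∈ Sstar)
          omega
  have hfinal := hmu (X.dist o w) w rfl (btw_refl_right o w)
  rw [indZ_of _ hwS] at hfinal
  refine ⟨k, by omega, ?_⟩
  have hwe : (φ (z ^ k)) o = w := by
    rw [hw]
    unfold zp
    rw [zpow_natCast]
  unfold Theta
  rw [hwe]
  omega

end MainC

end MGAux

/-- If a central element of a group acting on a median graph has unbounded orbits,
then it survives in a quotient of the group isomorphic to `ℤ`. -/
theorem central_unbounded_survives_in_Z {V : Type*} (X : SimpleGraph V)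
    (hX : MedianGraph X) {G : Type*} [Group G] (φ : G →* (X ≃g X))
    (z : G) (hz : z ∈ Subgroup.center G) (o : V)
    (hunb : ¬ BddAbove (Set.range fun n : ℤ => X.dist o (φ (z ^ n) o))) :
    ∃ Θ : G →* Multiplicative ℤ, Θ z ≠ 1 := by
  classical
  have hunb' : ¬ BddAbove (Set.range fun n : ℤ => X.dist o (MGAux.zp φ z n o)) := hunb
  by_cases hsk : ∃ (A : Set V) (N : ℕ), MGAux.SkewWall φ z o A N
  · obtain ⟨A₀, M, hskew⟩ := hsk
    obtain ⟨k, hk1, hkneg⟩ := MGAux.theta_nonzero hX φ hz o hskew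
    have hpow : ∀ m : ℕ, MGAux.Theta φ z o (z ^ m) = m * MGAux.Theta φ z o z := by
      intro m
      induction m with
      | zero =>
        rw [pow_zero, MGAux.theta_one hX φ z o]
        push_cast
        ring
      | succ m ih =>
        rw [pow_succ, MGAux.theta_mul hX φ hz o, ih]
        push_cast
        ring
    refine ⟨{ toFun := fun g => Multiplicative.ofAdd (MGAux.Theta φ z o g),
              map_one' := ?_, map_mul' := ?_ }, ?_⟩
    · show Multiplicative.ofAdd (MGAux.Theta φ z o 1) = 1
      rw [MGAux.theta_one hX φ z o]
      rfl
    · intro g h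
      show Multiplicative.ofAdd (MGAux.Theta φ z o (g * h)) =
        Multiplicative.ofAdd (MGAux.Theta φ z o g) * Multiplicative.ofAdd (MGAux.Theta φ z o h)
      rw [MGAux.theta_mul hX φ hz o g h]
      rfl
    · intro hcon
      have h0 : MGAux.Theta φ z o z = 0 := by
        have h1 := congrArg Multiplicative.toAdd hcon
        simpa using h1
      have h2 := hpow k
      rw [h0, mul_zero] at h2
      omega
  · push_neg at hsk
    exact absurd (MGAux.bounded_of_no_skew φ z o hX (fun A N => hsk A N)) hunb'
end

section
/- Let X be a median graph, g a graph automorphism of X, and γ_1, γ_2 : ℤ → V(X) two bi-infinite geodesics (d(γ_i(m), γ_i(n)) = |m − n| for all m, n) on which g acts as a translation: there are integers k_1, k_2 > 0 with g · γ_i(n) = γ_i(n + k_i) for all n. Then γ_1 and γ_2 cross exactly the same hyperplanes: for every halfspace D of X, (∃ m, n with γ_1(m) ∈ D and γ_1(n) ∉ D) if and only if (∃ m, n with γ_2(m) ∈ D and γ_2(n) ∉ D). -/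
open SimpleGraph

section Aux
variable {V : Type*} {X : SimpleGraph V}

lemma iso_dist_le (e : X ≃g X) (a b : V) : X.dist (e a) (e b) ≤ X.dist a b := by
  by_cases h : X.Reachable a b
  · obtain ⟨p, hp⟩ := h.exists_walk_length_eq_dist
    calc X.dist (e a) (e b) ≤ (p.map e.toHom).length := SimpleGraph.dist_le _
    _ = X.dist a b := by rw [SimpleGraph.Walk.length_map, hp]
  · rw [SimpleGraph.dist_eq_zero_of_not_reachable h]
    rw [SimpleGraph.dist_eq_zero_of_not_reachable]
    intro hr
    exact h (by simpa using hr.map e.symm.toHom)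

lemma iso_dist (e : X ≃g X) (a b : V) : X.dist (e a) (e b) = X.dist a b := by
  refine le_antisymm (iso_dist_le e a b) ?_
  have := iso_dist_le e.symm (e a) (e b)
  simpa using this

lemma iso_preimage_halfspace (e : X ≃g X) {D : Set V} (hD : IsHalfspace X D) :
    IsHalfspace X (⇑e ⁻¹' D) := by
  obtain ⟨⟨d, hd⟩, hne, hc, hcc⟩ := hD
  refine ⟨⟨e.symm d, by simp [hd]⟩, ?_, ?_, ?_⟩
  · intro h
    apply hne
    ext v
    simp only [Set.mem_univ, iff_true]
    have : e.symm v ∈ ⇑e ⁻¹' D := by rw [h]; trivial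
    simpa using this
  · intro x hx y hy w hw
    exact hc _ hx _ hy (e w) (by rw [iso_dist e x w, iso_dist e w y, iso_dist e x y]; exact hw)
  · intro x hx y hy w hw
    exact hcc _ hx _ hy (e w) (by rw [iso_dist e x w, iso_dist e w y, iso_dist e x y]; exact hw)

lemma sep_edge (hX : MedianGraph X) {E E' : Set V} (hE : IsHalfspace X E)
    (hE' : IsHalfspace X E') {x y : V} (hxy : X.Adj x y)
    (hx : x ∉ E) (hx' : x ∉ E') (hy : y ∈ E) (hy' : y ∈ E') : E = E' := by
  obtain ⟨hconn, hmed⟩ := hX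
  by_contra hne
  have hz : ∃ z, (z ∈ E ∧ z ∉ E') ∨ (z ∈ E' ∧ z ∉ E) := by
    by_contra hno
    push_neg at hno
    apply hne
    ext v
    have := hno v
    tauto
  obtain ⟨z, hz⟩ := hz
  obtain ⟨m, ⟨h1, h2, h3⟩, -⟩ := hmed x y z
  have hd1 : X.dist x y = 1 := SimpleGraph.dist_eq_one_iff_adj.mpr hxy
  rw [hd1] at h1
  have hm : m = x ∨ m = y := by
    rcases Nat.add_eq_one_iff.mp h1 with ⟨ha, -⟩ | ⟨-, hb⟩
    · left; exact (hconn.dist_eq_zero_iff.mp ha).symm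
    · right; exact hconn.dist_eq_zero_iff.mp hb
  rcases hz with ⟨hzE, hzE'⟩ | ⟨hzE', hzE⟩
  · -- z ∈ E \ E' : m on geodesic y–z both in E ⇒ m ∈ E; m on geodesic x–z both ∉ E' ⇒ m ∉ E'
    have hmE : m ∈ E := hE.2.2.1 y hy z hzE m h2
    have hmE' : m ∉ E' := hE'.2.2.2 x hx' z hzE' m h3
    rcases hm with rfl | rfl
    · exact hx hmE
    · exact hmE' hy'
  · have hmE' : m ∈ E' := hE'.2.2.1 y hy' z hzE' m h2
    have hmE : m ∉ E := hE.2.2.2 x hx z hzE m h3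
    rcases hm with rfl | rfl
    · exact hx' hmE'
    · exact hmE hy

lemma chain_bound (hX : MedianGraph X) :
    ∀ (c : ℕ) (u y : V), X.dist y u = c → ∀ E : ℕ → Set V,
      (∀ j, IsHalfspace X (E j)) → Function.Injective E →
      (∀ j, u ∈ E j) → (∀ j, y ∉ E j) → False := by
  intro c
  induction c with
  | zero =>
    intro u y hdist E hhalf hinj hu hy
    have : y = u := hX.1.dist_eq_zero_iff.mp hdist
    exact hy 0 (this ▸ hu 0)
  | succ c ih =>
    intro u y hdist E hhalf hinj hu hy
    obtain ⟨p, hp⟩ := (hX.1 y u).exists_walk_length_eq_dist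
    rw [hdist] at hp
    cases p with
    | nil => simp at hp
    | cons hadj q =>
      rename_i w
      simp only [SimpleGraph.Walk.length_cons, Nat.succ.injEq] at hp
      have hwu : X.dist w u = c := by
        have h1 : X.dist w u ≤ c := hp ▸ SimpleGraph.dist_le q
        have h2 : X.dist y u ≤ X.dist y w + X.dist w u := hX.1.dist_triangle
        have h3 : X.dist y w ≤ 1 := by
          have : X.dist y w = 1 := SimpleGraph.dist_eq_one_iff_adj.mpr hadj
          omega
        omega
      by_cases hw : ∃ j, w ∈ E j
      · obtain ⟨j₀, hj₀⟩ := hw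
        have huniq : ∀ j, w ∈ E j → j = j₀ := by
          intro j hj
          exact hinj (sep_edge hX (hhalf j) (hhalf j₀) hadj (hy j) (hy j₀) hj hj₀)
        set E' : ℕ → Set V := fun j => E (if j < j₀ then j else j + 1) with hE'
        refine ih u w hwu E' (fun j => hhalf _) ?_ (fun j => hu _) ?_
        · intro a b hab
          have := hinj hab
          split_ifs at this <;> omega
        · intro j hj
          have := huniq _ hj
          split_ifs at this <;> omega
      · push_neg at hw
        exact ih u w hwu E hhalf hinj hu hw

lemma iterate_trans {γ : ℤ → V} {k : ℤ} (g : X ≃g X)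
    (htr : ∀ n : ℤ, g (γ n) = γ (n + k)) :
    ∀ (j : ℕ) (t : ℤ), (⇑g)^[j] (γ t) = γ (t + j * k) := by
  intro j
  induction j with
  | zero => intro t; simp
  | succ j ihj =>
    intro t
    rw [Function.iterate_succ_apply, htr, ihj]
    congr 1
    push_cast
    ring

lemma core (hX : MedianGraph X) (g : X ≃g X) (γ₁ γ₂ : ℤ → V) (k₁ k₂ : ℤ)
    (hk₁ : 0 < k₁) (hk₂ : 0 < k₂)
    (htr₁ : ∀ n : ℤ, g (γ₁ n) = γ₁ (n + k₁))
    (htr₂ : ∀ n : ℤ, g (γ₂ n) = γ₂ (n + k₂))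
    (D : Set V) (hD : IsHalfspace X D) (N : ℤ)
    (htrace : ∀ t, γ₁ t ∈ D ↔ N ≤ t) (hout : ∀ t, γ₂ t ∉ D) : False := by
  set E : ℕ → Set V := fun j => (fun v => (⇑g)^[j] v) ⁻¹' D with hE
  have hEsucc : ∀ j, E (j + 1) = ⇑g ⁻¹' E j := by
    intro j
    ext v
    simp only [hE, Set.mem_preimage, Function.iterate_succ_apply]
  have hhalf : ∀ j, IsHalfspace X (E j) := by
    intro j
    induction j with
    | zero => simpa [hE] using hD
    | succ j ihj => rw [hEsucc]; exact iso_preimage_halfspace g ihj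
  have hmem₁ : ∀ (j : ℕ) (t : ℤ), γ₁ t ∈ E j ↔ N ≤ t + j * k₁ := by
    intro j t
    simp only [hE, Set.mem_preimage, iterate_trans g htr₁ j t, htrace]
  have hinj : Function.Injective E := by
    have key : ∀ i j : ℕ, i < j → E i ≠ E j := by
      intro i j hij heq
      have h1 : γ₁ (N - 1 - i * k₁) ∉ E i := by
        rw [hmem₁]; omega
      rw [heq, hmem₁] at h1
      apply h1
      have : (1 : ℤ) ≤ ((j : ℤ) - i) * k₁ := by
        have h2 : (1 : ℤ) ≤ (j : ℤ) - i := by omega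
        nlinarith
      nlinarith
    intro a b hab
    by_contra hne
    rcases Nat.lt_or_ge a b with h | h
    · exact key a b h hab
    · exact key b a (by omega) hab.symm
  have hu : ∀ j, γ₁ N ∈ E j := by
    intro j
    rw [hmem₁]
    have : (0 : ℤ) ≤ (j : ℤ) * k₁ := by positivity
    omega
  have hy : ∀ j, γ₂ 0 ∉ E j := by
    intro j
    simp only [hE, Set.mem_preimage, iterate_trans g htr₂ j 0]
    exact hout _
  exact chain_bound hX (X.dist (γ₂ 0) (γ₁ N)) (γ₁ N) (γ₂ 0) rfl E hhalf hinj hu hy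

lemma ray_trace {γ : ℤ → V} {D : Set V} (hD : IsHalfspace X D)
    (hgeo : ∀ m n : ℤ, X.dist (γ m) (γ n) = (m - n).natAbs)
    {m n : ℤ} (hnm : n < m) (hm : γ m ∈ D) (hn : γ n ∉ D) :
    ∃ N : ℤ, ∀ t, γ t ∈ D ↔ N ≤ t := by
  have hsum : ∀ a t b : ℤ, a ≤ t → t ≤ b →
      X.dist (γ a) (γ t) + X.dist (γ t) (γ b) = X.dist (γ a) (γ b) := by
    intro a t b h1 h2
    rw [hgeo, hgeo, hgeo]
    omega
  have hconv : ∀ a t b : ℤ, a ≤ t → t ≤ b → γ a ∈ D → γ b ∈ D → γ t ∈ D :=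
    fun a t b h1 h2 ha hb => hD.2.2.1 _ ha _ hb _ (hsum a t b h1 h2)
  have hconvc : ∀ a t b : ℤ, a ≤ t → t ≤ b → γ a ∉ D → γ b ∉ D → γ t ∉ D :=
    fun a t b h1 h2 ha hb => hD.2.2.2 _ ha _ hb _ (hsum a t b h1 h2)
  have hbdd : ∀ t, γ t ∈ D → n < t := by
    intro t ht
    by_contra hc
    exact hn (hconv t n m (by omega) (by omega) ht hm)
  obtain ⟨N, hN, hleast⟩ := Int.exists_least_of_bdd (P := fun t => γ t ∈ D)
    ⟨n + 1, fun z hz => by have := hbdd z hz; omega⟩ ⟨m, hm⟩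
  refine ⟨N, fun t => ⟨hleast t, fun ht => ?_⟩⟩
  by_contra hc
  exact (hconvc n N t (by have := hbdd N hN; omega) ht hn hc) hN

lemma half_core (hX : MedianGraph X) (g : X ≃g X) (γ₁ γ₂ : ℤ → V)
    (hgeo₁ : ∀ m n : ℤ, X.dist (γ₁ m) (γ₁ n) = (m - n).natAbs)
    (k₁ k₂ : ℤ) (hk₁ : 0 < k₁) (hk₂ : 0 < k₂)
    (htr₁ : ∀ n : ℤ, g (γ₁ n) = γ₁ (n + k₁))
    (htr₂ : ∀ n : ℤ, g (γ₂ n) = γ₂ (n + k₂))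
    (D : Set V) (hD : IsHalfspace X D)
    (m n : ℤ) (hm : γ₁ m ∈ D) (hn : γ₁ n ∉ D)
    (hout : ∀ t, γ₂ t ∉ D) : False := by
  have htr₁' : ∀ t : ℤ, g.symm (γ₁ t) = γ₁ (t - k₁) := by
    intro t
    have := htr₁ (t - k₁)
    rw [sub_add_cancel] at this
    have h2 := congrArg g.symm this
    rw [RelIso.symm_apply_apply] at h2
    exact h2.symm
  have htr₂' : ∀ t : ℤ, g.symm (γ₂ t) = γ₂ (t - k₂) := by
    intro t
    have := htr₂ (t - k₂)
    rw [sub_add_cancel] at this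
    have h2 := congrArg g.symm this
    rw [RelIso.symm_apply_apply] at h2
    exact h2.symm
  rcases lt_or_gt_of_ne (show n ≠ m from fun h => hn (h ▸ hm)) with hlt | hlt
  · obtain ⟨N, hN⟩ := ray_trace hD hgeo₁ hlt hm hn
    exact core hX g γ₁ γ₂ k₁ k₂ hk₁ hk₂ htr₁ htr₂ D hD N hN hout
  · -- m < n : reverse the axes
    set δ₁ : ℤ → V := fun t => γ₁ (-t) with hδ₁
    set δ₂ : ℤ → V := fun t => γ₂ (-t) with hδ₂
    have hgeoδ : ∀ a b : ℤ, X.dist (δ₁ a) (δ₁ b) = (a - b).natAbs := by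
      intro a b
      rw [hδ₁]
      simp only [hgeo₁]
      omega
    obtain ⟨N, hN⟩ := ray_trace hD hgeoδ (show -n < -m by omega)
      (show δ₁ (-m) ∈ D by simpa [hδ₁] using hm)
      (show δ₁ (-n) ∉ D by simpa [hδ₁] using hn)
    refine core hX g.symm δ₁ δ₂ k₁ k₂ hk₁ hk₂ ?_ ?_ D hD N hN (fun t => hout _)
    · intro t
      rw [hδ₁]
      simp only [htr₁']
      congr 1
      ring
    · intro t
      rw [hδ₂]
      simp only [htr₂']
      congr 1
      ring

lemma main_aux (hX : MedianGraph X) (g : X ≃g X) (γ₁ γ₂ : ℤ → V)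
    (hgeo₁ : ∀ m n : ℤ, X.dist (γ₁ m) (γ₁ n) = (m - n).natAbs)
    (k₁ k₂ : ℤ) (hk₁ : 0 < k₁) (hk₂ : 0 < k₂)
    (htr₁ : ∀ n : ℤ, g (γ₁ n) = γ₁ (n + k₁))
    (htr₂ : ∀ n : ℤ, g (γ₂ n) = γ₂ (n + k₂))
    (D : Set V) (hD : IsHalfspace X D)
    (hcross : ∃ m n : ℤ, γ₁ m ∈ D ∧ γ₁ n ∉ D) :
    ∃ m n : ℤ, γ₂ m ∈ D ∧ γ₂ n ∉ D := by
  obtain ⟨m, n, hm, hn⟩ := hcross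
  by_contra hnot
  push_neg at hnot
  by_cases hy : ∃ t, γ₂ t ∈ D
  · obtain ⟨t₀, ht₀⟩ := hy
    have hall : ∀ t, γ₂ t ∈ D := fun t => hnot t₀ t ht₀
    have hDc : IsHalfspace X Dᶜ := by
      refine ⟨Set.nonempty_compl.mpr hD.2.1, ?_, hD.2.2.2, by
        simpa [compl_compl] using hD.2.2.1⟩
      intro h
      obtain ⟨d, hd⟩ := hD.1
      have : d ∈ Dᶜ := h ▸ Set.mem_univ d
      exact this hd
    exact half_core hX g γ₁ γ₂ hgeo₁ k₁ k₂ hk₁ hk₂ htr₁ htr₂ Dᶜ hDc n m hn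
      (by simpa using hm) (fun t => by simpa using hall t)
  · push_neg at hy
    exact half_core hX g γ₁ γ₂ hgeo₁ k₁ k₂ hk₁ hk₂ htr₁ htr₂ D hD m n hm hn hy


end Aux

/-- Two axes of the same automorphism of a median graph cross exactly the same
hyperplanes. -/
theorem axes_cross_same_hyperplanes {V : Type*} (X : SimpleGraph V)
    (hX : MedianGraph X) (g : X ≃g X) (γ₁ γ₂ : ℤ → V)
    (hgeo₁ : ∀ m n : ℤ, X.dist (γ₁ m) (γ₁ n) = (m - n).natAbs)
    (hgeo₂ : ∀ m n : ℤ, X.dist (γ₂ m) (γ₂ n) = (m - n).natAbs)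
    (k₁ k₂ : ℤ) (hk₁ : 0 < k₁) (hk₂ : 0 < k₂)
    (htr₁ : ∀ n : ℤ, g (γ₁ n) = γ₁ (n + k₁))
    (htr₂ : ∀ n : ℤ, g (γ₂ n) = γ₂ (n + k₂))
    (D : Set V) (hD : IsHalfspace X D) :
    (∃ m n : ℤ, γ₁ m ∈ D ∧ γ₁ n ∉ D) ↔ (∃ m n : ℤ, γ₂ m ∈ D ∧ γ₂ n ∉ D) := by
  constructor
  · exact main_aux hX g γ₁ γ₂ hgeo₁ k₁ k₂ hk₁ hk₂ htr₁ htr₂ D hD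
  · exact main_aux hX g γ₂ γ₁ hgeo₂ k₂ k₁ hk₂ hk₁ htr₂ htr₁ D hD
end

section
/- Let X be a median graph and let x, y be adjacent vertices. Then the set D = {v : d(v,x) < d(v,y)} is a halfspace of X: it is nonempty, proper, convex, and its complement equals {v : d(v,y) < d(v,x)} and is convex. -/
open SimpleGraph

private lemma side_lemma {V : Type*} {X : SimpleGraph V} (hX : MedianGraph X)
    {x y : V} (hxy : X.Adj x y) (v : V) :
    X.dist v y = X.dist v x + 1 ∨ X.dist v x = X.dist v y + 1 := by
  obtain ⟨m, ⟨h1, h2, h3⟩, -⟩ := hX.2 v x y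
  have hxy1 : X.dist x y = 1 := dist_eq_one_iff_adj.mpr hxy
  rw [hxy1] at h2
  rcases Nat.add_eq_one_iff.mp h2 with ⟨ha, hb⟩ | ⟨ha, hb⟩
  · have hmx : m = x := hX.1.dist_eq_zero_iff.mp (by rwa [SimpleGraph.dist_comm] at ha)
    left
    rw [hmx, hxy1] at h3
    omega
  · have hmy : m = y := hX.1.dist_eq_zero_iff.mp hb
    right
    have hyx : X.dist y x = 1 := by rw [SimpleGraph.dist_comm]; exact hxy1
    rw [hmy, hyx] at h1
    omega

private lemma toward_x {V : Type*} {X : SimpleGraph V} (hX : MedianGraph X)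
    {x y : V} (hxy : X.Adj x y) {u r : V}
    (hu : X.dist u y = X.dist u x + 1)
    (hr : X.dist u r + X.dist r x = X.dist u x) :
    X.dist r y = X.dist r x + 1 := by
  rcases side_lemma hX hxy r with h | h
  · exact h
  · have ht : X.dist u y ≤ X.dist u r + X.dist r y := hX.1.dist_triangle
    omega

private lemma no_cross {V : Type*} {X : SimpleGraph V} (hX : MedianGraph X)
    {x y : V} (hxy : X.Adj x y) :
    ∀ n u v w, X.dist u v + X.dist w x ≤ n →
      X.dist u y = X.dist u x + 1 → X.dist v y = X.dist v x + 1 →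
      X.dist w x = X.dist w y + 1 →
      X.dist u w + X.dist w v = X.dist u v → False := by
  have hC := hX.1
  intro n
  induction n with
  | zero => intro u v w hn hu hv hw hb; omega
  | succ n ih =>
    intro u v w hn hu hv hw hb
    obtain ⟨m, ⟨hm1, hm2, hm3⟩, -⟩ := hX.2 w v x
    have hmD : X.dist m y = X.dist m x + 1 := toward_x hX hxy hv hm2
    by_cases hmv : m = v
    case neg =>
      have t1 : X.dist u m ≤ X.dist u w + X.dist w m := hC.dist_triangle
      have t2 : X.dist u v ≤ X.dist u m + X.dist m v := hC.dist_triangle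
      have hmv0 : X.dist m v ≠ 0 := fun h => hmv (hC.dist_eq_zero_iff.mp h)
      have hbm : X.dist u w + X.dist w m = X.dist u m := by omega
      exact ih u m w (by omega) hu hmD hw hbm
    case pos =>
      have hv' : X.dist w v + X.dist v x = X.dist w x := hmv ▸ hm3
      obtain ⟨m', ⟨hn1, hn2, hn3⟩, -⟩ := hX.2 w u x
      have hm'D : X.dist m' y = X.dist m' x + 1 := toward_x hX hxy hu hn2
      by_cases hmu : m' = u
      case neg =>
        have t1 : X.dist m' v ≤ X.dist m' w + X.dist w v := hC.dist_triangle
        have t2 : X.dist u v ≤ X.dist u m' + X.dist m' v := hC.dist_triangle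
        have c1 : X.dist m' w = X.dist w m' := SimpleGraph.dist_comm
        have c2 : X.dist u m' = X.dist m' u := SimpleGraph.dist_comm
        have c3 : X.dist u w = X.dist w u := SimpleGraph.dist_comm
        have hmu0 : X.dist m' u ≠ 0 := fun h => hmu (hC.dist_eq_zero_iff.mp h)
        have hbm : X.dist m' w + X.dist w v = X.dist m' v := by omega
        exact ih m' v w (by omega) hm'D hv hw hbm
      case pos =>
        have hu' : X.dist w u + X.dist u x = X.dist w x := hmu ▸ hn3
        obtain ⟨p, ⟨hp1, hp2, hp3⟩, -⟩ := hX.2 u w y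
        have hpC : X.dist p x = X.dist p y + 1 := toward_x hX hxy.symm hw hp2
        by_cases hpw : p = w
        case neg =>
          have t1 : X.dist p v ≤ X.dist p w + X.dist w v := hC.dist_triangle
          have t2 : X.dist u v ≤ X.dist u p + X.dist p v := hC.dist_triangle
          have c1 : X.dist p w = X.dist w p := SimpleGraph.dist_comm
          have hpw0 : X.dist p w ≠ 0 := fun h => hpw (hC.dist_eq_zero_iff.mp h)
          have hbm : X.dist u p + X.dist p v = X.dist u v := by omega
          exact ih u v p (by omega) hu hv hpC hbm
        case pos =>
          have hp3' : X.dist u w + X.dist w y = X.dist u y := by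
            rw [hpw] at hp3; exact hp3
          obtain ⟨q, ⟨hq1, hq2, hq3⟩, -⟩ := hX.2 v w y
          have hqC : X.dist q x = X.dist q y + 1 := toward_x hX hxy.symm hw hq2
          by_cases hqw : q = w
          case neg =>
            have t1 : X.dist u q ≤ X.dist u w + X.dist w q := hC.dist_triangle
            have t2 : X.dist u v ≤ X.dist u q + X.dist q v := hC.dist_triangle
            have c1 : X.dist q w = X.dist w q := SimpleGraph.dist_comm
            have c2 : X.dist q v = X.dist v q := SimpleGraph.dist_comm
            have c3 : X.dist w v = X.dist v w := SimpleGraph.dist_comm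
            have hqw0 : X.dist q w ≠ 0 := fun h => hqw (hC.dist_eq_zero_iff.mp h)
            have hbm : X.dist u q + X.dist q v = X.dist u v := by omega
            exact ih u v q (by omega) hu hv hqC hbm
          case pos =>
            have hq3' : X.dist v w + X.dist w y = X.dist v y := by
              rw [hqw] at hq3; exact hq3
            obtain ⟨s, ⟨hs1, hs2, hs3⟩, -⟩ := hX.2 u v x
            have hsD : X.dist s y = X.dist s x + 1 := toward_x hX hxy hu hs3
            obtain ⟨m0, -, huniq⟩ := hX.2 u v y
            have e1 : w = m0 := huniq w ⟨hb, hq3', hp3'⟩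
            have e2 : s = m0 := huniq s ⟨hs1, by omega, by omega⟩
            rw [e1.trans e2.symm] at hw
            omega

private lemma convexD {V : Type*} {X : SimpleGraph V} (hX : MedianGraph X)
    {x y : V} (hxy : X.Adj x y) :
    IsConvex X {v : V | X.dist v x < X.dist v y} := by
  intro a ha b hb w hw
  simp only [Set.mem_setOf_eq] at *
  have ha' : X.dist a y = X.dist a x + 1 := by rcases side_lemma hX hxy a with h|h <;> omega
  have hb' : X.dist b y = X.dist b x + 1 := by rcases side_lemma hX hxy b with h|h <;> omega
  by_contra hwD
  have hw' : X.dist w x = X.dist w y + 1 := by rcases side_lemma hX hxy w with h|h <;> omega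
  exact no_cross hX hxy (X.dist a b + X.dist w x) a b w le_rfl ha' hb' hw' hw

/-- In a median graph, the set of vertices strictly closer to `x` than to its
neighbour `y` is a halfspace, with complement the set of vertices strictly closer
to `y`. -/
theorem halfspace_of_adjacent {V : Type*} (X : SimpleGraph V)
    (hX : MedianGraph X) (x y : V) (hxy : X.Adj x y) :
    IsHalfspace X {v : V | X.dist v x < X.dist v y} ∧
      {v : V | X.dist v x < X.dist v y}ᶜ = {v : V | X.dist v y < X.dist v x} := by
  have hC := hX.1
  have hcompl : {v : V | X.dist v x < X.dist v y}ᶜ = {v : V | X.dist v y < X.dist v x} := by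
    ext v
    simp only [Set.mem_compl_iff, Set.mem_setOf_eq, not_lt]
    rcases side_lemma hX hxy v with h|h <;> omega
  refine ⟨⟨⟨x, ?_⟩, ?_, convexD hX hxy, ?_⟩, hcompl⟩
  · simp only [Set.mem_setOf_eq, SimpleGraph.dist_self]
    exact hC.pos_dist_of_ne hxy.ne
  · intro hDuniv
    have hy : y ∈ {v : V | X.dist v x < X.dist v y} := hDuniv ▸ Set.mem_univ y
    simp only [Set.mem_setOf_eq] at hy
    have h2 : X.dist y y = 0 := SimpleGraph.dist_self
    omega
  · rw [hcompl]
    exact convexD hX hxy.symm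
end
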